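/- arXiv:1408.2303 — 7 statements merged into one kernel-verified Lean document; each statement's English description precedes it below -/
import Mathlib

section
/- Let g_1,...,g_n be F_q-linearly independent elements of F_{q^m} and r_1,...,r_n in F_{q^m}. Define recursively Pi_1(x) = x^q - g_1^{q-1} x, Lambda_1(x) = (r_1/g_1) x, and Pi_{i+1}(x) = Pi_i(x)^q - Pi_i(g_{i+1})^{q-1} Pi_i(x), Lambda_{i+1}(x) = Lambda_i(x) - ((Lambda_i(g_{i+1}) - r_{i+1})/Pi_i(g_{i+1})) Pi_i(x). Then Pi_i is the q-annihilator polynomial of span(g_1,...,g_i), and Lambda_i is the unique q-linearized polynomial of q-degree at most i-1 with Lambda_i(g_j) = r_j for j = 1,...,i. -/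
open Polynomial

/-- A `q`-linearized polynomial: all monomials have exponent a power of `q`. -/
def IsLin {F : Type*} [Field F] (q : ℕ) (f : Polynomial F) : Prop :=
  ∀ i ∈ f.support, ∃ j : ℕ, i = q ^ j

/-- Recursive construction of the `q`-annihilator polynomials:
`Π_1(x) = x^q - g_1^{q-1} x`, `Π_{i+1}(x) = Π_i(x)^q - Π_i(g_{i+1})^{q-1} Π_i(x)`
(0-indexed: `Pirec q g i` corresponds to `Π_{i+1}`). -/
noncomputable def Pirec {F : Type*} [Field F] (q : ℕ) (g : ℕ → F) : ℕ → Polynomial F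
  | 0 => X ^ q - C (g 0 ^ (q - 1)) * X
  | i + 1 => Pirec q g i ^ q - C ((Pirec q g i).eval (g (i + 1)) ^ (q - 1)) * Pirec q g i

/-- Recursive construction of the `q`-Lagrange polynomials:
`Λ_1(x) = (r_1/g_1) x`,
`Λ_{i+1}(x) = Λ_i(x) - ((Λ_i(g_{i+1}) - r_{i+1})/Π_i(g_{i+1})) Π_i(x)`
(0-indexed: `Lamrec q g r i` corresponds to `Λ_{i+1}`). -/
noncomputable def Lamrec {F : Type*} [Field F] (q : ℕ) (g r : ℕ → F) : ℕ → Polynomial F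
  | 0 => C (r 0 / g 0) * X
  | i + 1 => Lamrec q g r i -
      C (((Lamrec q g r i).eval (g (i + 1)) - r (i + 1)) / (Pirec q g i).eval (g (i + 1))) *
        Pirec q g i

section Aux

variable {F : Type*} [Field F] {q : ℕ}

lemma pow_q_pow_add (hq : ∀ x y : F, (x + y) ^ q = x ^ q + y ^ q) (j : ℕ) (x y : F) :
    (x + y) ^ q ^ j = x ^ q ^ j + y ^ q ^ j := by
  induction j with
  | zero => simp
  | succ j ih =>
    rw [pow_succ, pow_mul, ih, hq, ← pow_mul, ← pow_mul, ← pow_succ]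

lemma pow_q_pow_fix {a : F} (ha : a ^ q = a) (j : ℕ) : a ^ q ^ j = a := by
  induction j with
  | zero => simp
  | succ j ih => rw [pow_succ, pow_mul, ih, ha]

lemma IsLin.eval_add (hq : ∀ x y : F, (x + y) ^ q = x ^ q + y ^ q)
    {f : Polynomial F} (hf : IsLin q f) (x y : F) :
    f.eval (x + y) = f.eval x + f.eval y := by
  rw [eval_eq_sum, eval_eq_sum, eval_eq_sum, Polynomial.sum, Polynomial.sum, Polynomial.sum,
    ← Finset.sum_add_distrib]
  refine Finset.sum_congr rfl fun i hi => ?_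
  obtain ⟨j, rfl⟩ := hf i hi
  rw [pow_q_pow_add hq, mul_add]

lemma IsLin.eval_mul (hq : ∀ x y : F, (x + y) ^ q = x ^ q + y ^ q) {a : F} (ha : a ^ q = a)
    {f : Polynomial F} (hf : IsLin q f) (x : F) :
    f.eval (a * x) = a * f.eval x := by
  rw [eval_eq_sum, eval_eq_sum, Polynomial.sum, Polynomial.sum, Finset.mul_sum]
  refine Finset.sum_congr rfl fun i hi => ?_
  obtain ⟨j, rfl⟩ := hf i hi
  rw [mul_pow, pow_q_pow_fix ha]
  ring

lemma IsLin.eval_zero' (hq : ∀ x y : F, (x + y) ^ q = x ^ q + y ^ q)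
    {f : Polynomial F} (hf : IsLin q f) : f.eval 0 = 0 := by
  have := hf.eval_add hq 0 0
  rw [add_zero] at this
  exact (left_eq_add.1 this)

lemma IsLin.eval_span {Fq : Type*} [Field Fq] [Algebra Fq F]
    (hq : ∀ x y : F, (x + y) ^ q = x ^ q + y ^ q)
    (hsc : ∀ c : Fq, (algebraMap Fq F c) ^ q = algebraMap Fq F c)
    {f : Polynomial F} (hf : IsLin q f) {s : Set F} (h0 : ∀ x ∈ s, f.eval x = 0) :
    ∀ x ∈ Submodule.span Fq s, f.eval x = 0 := by
  intro x hx
  induction hx using Submodule.span_induction with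
  | mem x hxs => exact h0 x hxs
  | zero => exact hf.eval_zero' hq
  | add x y _ _ ihx ihy => rw [hf.eval_add hq, ihx, ihy, add_zero]
  | smul c x _ ih => rw [Algebra.smul_def, hf.eval_mul hq (hsc c), ih, mul_zero]

lemma IsLin.sub {f g : Polynomial F} (hf : IsLin q f) (hg : IsLin q g) : IsLin q (f - g) := by
  intro i hi
  have hsub : (f - g).support ⊆ f.support ∪ g.support := by
    rw [sub_eq_add_neg]
    refine Polynomial.support_add.trans ?_
    rw [Polynomial.support_neg]
  rcases Finset.mem_union.1 (hsub hi) with h | h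
  · exact hf i h
  · exact hg i h

lemma IsLin.C_mul {f : Polynomial F} (c : F) (hf : IsLin q f) : IsLin q (C c * f) := by
  intro i hi
  refine hf i ?_
  rw [← smul_eq_C_mul] at hi
  exact Polynomial.support_smul c f hi

lemma IsLin.pow_q {p s : ℕ} [hp : Fact p.Prime] [CharP F p] (hqs : q = p ^ s)
    {f : Polynomial F} (hf : IsLin q f) : IsLin q (f ^ q) := by
  intro i hi
  rw [mem_support_iff] at hi
  rw [hqs, ← map_iterateFrobenius_expand p, coeff_map] at hi
  have h2 : (expand F (p ^ s) f).coeff i ≠ 0 := fun h => by simp [h] at hi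
  rw [coeff_expand (pow_pos hp.out.pos s)] at h2
  rw [← hqs] at h2
  split_ifs at h2 with hdvd
  · obtain ⟨j, hj⟩ := hf (i / q) (mem_support_iff.2 h2)
    exact ⟨j + 1, by rw [← Nat.div_mul_cancel hdvd, hj, pow_succ]⟩
  · exact absurd rfl h2

end Aux

section PirecLemmas

variable {F : Type*} [Field F] {q : ℕ}

lemma isLin_X_pow_q : IsLin q (X ^ q : Polynomial F) := by
  intro i hi
  rw [support_X_pow, Finset.mem_singleton] at hi
  exact ⟨1, by rw [hi, pow_one]⟩

lemma isLin_X : IsLin q (X : Polynomial F) := by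
  intro i hi
  rw [support_X, Finset.mem_singleton] at hi
  exact ⟨0, by rw [hi, pow_zero]⟩

lemma degree_C_mul_le' (a : F) (f : Polynomial F) : degree (C a * f) ≤ degree f :=
  (degree_mul_le _ _).trans (by simpa using add_le_add degree_C_le (le_refl (degree f)))

lemma pirec_monic (hq : 2 ≤ q) (g : ℕ → F) :
    ∀ i, (Pirec q g i).Monic ∧ (Pirec q g i).natDegree = q ^ (i + 1) := by
  intro i
  induction i with
  | zero =>
    have hdlt : degree (C (g 0 ^ (q - 1)) * X) < degree (X ^ q : Polynomial F) := by
      refine lt_of_le_of_lt (degree_C_mul_le' _ _) ?_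
      rw [degree_X, degree_X_pow]
      exact_mod_cast (by omega : (1 : ℕ) < q)
    constructor
    · exact (monic_X_pow q).sub_of_left hdlt
    · show natDegree (X ^ q - C (g 0 ^ (q - 1)) * X) = q ^ 1
      rw [pow_one]
      have := degree_sub_eq_left_of_degree_lt hdlt
      rw [degree_X_pow] at this
      exact natDegree_eq_of_degree_eq_some this
  | succ i ih =>
    obtain ⟨hm, hd⟩ := ih
    have hq1 : 1 < q := by omega
    have hmq : (Pirec q g i ^ q).Monic := hm.pow q
    have hdq : (Pirec q g i ^ q).natDegree = q ^ (i + 2) := by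
      rw [natDegree_pow, hd, ← pow_succ']
    have hdlt : degree (C ((Pirec q g i).eval (g (i + 1)) ^ (q - 1)) * Pirec q g i) <
        degree (Pirec q g i ^ q) := by
      refine lt_of_le_of_lt (degree_C_mul_le' _ _) ?_
      rw [degree_eq_natDegree hm.ne_zero, degree_eq_natDegree hmq.ne_zero, hd, hdq]
      exact_mod_cast pow_lt_pow_right₀ hq1 (by omega)
    constructor
    · exact hmq.sub_of_left hdlt
    · show natDegree (Pirec q g i ^ q - _) = _
      have := degree_sub_eq_left_of_degree_lt hdlt
      rw [degree_eq_natDegree hmq.ne_zero, hdq] at this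
      exact natDegree_eq_of_degree_eq_some this

lemma pirec_isLin {p s : ℕ} [Fact p.Prime] [CharP F p] (hqs : q = p ^ s) (g : ℕ → F) :
    ∀ i, IsLin q (Pirec q g i) := by
  intro i
  induction i with
  | zero => exact isLin_X_pow_q.sub (isLin_X.C_mul _)
  | succ i ih => exact (ih.pow_q hqs).sub (ih.C_mul _)

lemma pirec_root (hq : 1 ≤ q) (g : ℕ → F) :
    ∀ i, ∀ j ≤ i, (Pirec q g i).eval (g j) = 0 := by
  intro i
  induction i with
  | zero =>
    intro j hj
    rw [Nat.le_zero] at hj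
    subst hj
    show eval (g 0) (X ^ q - C (g 0 ^ (q - 1)) * X) = 0
    rw [eval_sub, eval_pow, eval_X, eval_mul, eval_C, eval_X, ← pow_succ,
      Nat.sub_add_cancel hq, sub_self]
  | succ i ih =>
    intro j hj
    show eval (g j) (Pirec q g i ^ q - C ((Pirec q g i).eval (g (i + 1)) ^ (q - 1)) * Pirec q g i) = 0
    rw [eval_sub, eval_pow, eval_mul, eval_C]
    rcases Nat.lt_succ_iff_lt_or_eq.1 (Nat.lt_succ_of_le hj) with h | h
    · rw [ih j (Nat.lt_succ_iff.1 h), zero_pow (by omega), mul_zero, sub_self]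
    · subst h
      rw [← pow_succ, Nat.sub_add_cancel hq, sub_self]

end PirecLemmas

lemma eq_prod_of_monic_of_roots {F : Type*} [Field F] (P : Polynomial F) (S : Finset F)
    (hP : P.Monic) (hd : P.natDegree = S.card) (hroots : ∀ u ∈ S, P.eval u = 0) :
    P = ∏ u ∈ S, (X - C u) := by
  have hne : P ≠ 0 := hP.ne_zero
  have hle : S.val ≤ P.roots :=
    (Multiset.le_iff_subset S.nodup).2 fun a ha => (mem_roots'.2 ⟨hne, hroots a ha⟩)
  have hdvd : (∏ u ∈ S, (X - C u)) ∣ P := by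
    rw [Finset.prod_eq_multiset_prod]
    exact (Multiset.prod_X_sub_C_dvd_iff_le_roots hne S.val).2 hle
  have hQm : (∏ u ∈ S, (X - C u)).Monic := monic_prod_of_monic _ _ fun u _ => monic_X_sub_C u
  have hQd : (∏ u ∈ S, (X - C u)).natDegree = S.card := by
    rw [natDegree_prod _ _ fun u _ => X_sub_C_ne_zero u]
    simp [natDegree_X_sub_C]
  symm
  refine eq_of_dvd_of_natDegree_le_of_leadingCoeff hdvd ?_ ?_
  · rw [hd, hQd]
  · rw [hQm.leadingCoeff, hP.leadingCoeff]

/-- For `Fq`-linearly independent `g 0, ..., g (n-1)` in the finite field `F` and any `r`: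
for each `i < n`, `Pirec q g i` is the `q`-annihilator polynomial of the span of
`g 0, ..., g i`, and `Lamrec q g r i` is the unique `q`-linearized polynomial of
`q`-degree at most `i` (i.e. degree at most `q ^ i`) with `Λ(g j) = r j` for `j ≤ i`. -/
theorem stmt4 {Fq F : Type*} [Field Fq] [Fintype Fq] [Field F] [Fintype F] [Algebra Fq F]
    {n : ℕ} (g r : ℕ → F) (hg : LinearIndependent Fq (fun i : Fin n => g i)) :
    ∀ i : ℕ, i < n →
      (Pirec (Fintype.card Fq) g i =
        ∏ u ∈ (Set.toFinite ((Submodule.span Fq (g '' Set.Iic i) : Submodule Fq F) : Set F)).toFinset,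
          (X - C u)) ∧
      IsLin (Fintype.card Fq) (Lamrec (Fintype.card Fq) g r i) ∧
      (Lamrec (Fintype.card Fq) g r i).natDegree ≤ Fintype.card Fq ^ i ∧
      (∀ j ≤ i, (Lamrec (Fintype.card Fq) g r i).eval (g j) = r j) ∧
      (∀ L : Polynomial F, IsLin (Fintype.card Fq) L →
        L.natDegree ≤ Fintype.card Fq ^ i → (∀ j ≤ i, L.eval (g j) = r j) →
        L = Lamrec (Fintype.card Fq) g r i) := by
  classical
  set q := Fintype.card Fq with hqdef
  obtain ⟨p, hpchar⟩ := CharP.exists Fq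
  haveI : CharP Fq p := hpchar
  obtain ⟨s, hps, hcard⟩ := FiniteField.card Fq p
  haveI hfp : Fact p.Prime := ⟨hps⟩
  haveI : CharP F p := charP_of_injective_algebraMap (algebraMap Fq F).injective p
  have hqs : q = p ^ (s : ℕ) := hcard
  have hq2 : 2 ≤ q := Fintype.one_lt_card
  have hq1 : 1 ≤ q := by omega
  have hadd : ∀ x y : F, (x + y) ^ q = x ^ q + y ^ q := fun x y => by
    rw [hqs]; exact add_pow_char_pow x y p (s : ℕ)
  have hsc : ∀ c : Fq, (algebraMap Fq F c) ^ q = algebraMap Fq F c := fun c => by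
    rw [← map_pow, FiniteField.pow_card]
  -- cardinality of spans
  have hcardS : ∀ i, i < n →
      ((Set.toFinite ((Submodule.span Fq (g '' Set.Iic i) : Submodule Fq F) : Set F)).toFinset).card
        = q ^ (i + 1) := by
    intro i hi
    have hinj : Function.Injective (fun k : Fin (i + 1) => (⟨k.1, lt_of_lt_of_le k.isLt hi⟩ : Fin n)) :=
      by intro a b h; simpa [Fin.ext_iff] using h
    have hw : LinearIndependent Fq (fun k : Fin (i + 1) => g (k : ℕ)) := hg.comp _ hinj
    have hrange : Set.range (fun k : Fin (i + 1) => g (k : ℕ)) = g '' Set.Iic i := by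
      ext x
      constructor
      · rintro ⟨k, rfl⟩
        exact ⟨k, Set.mem_Iic.mpr (Nat.lt_succ_iff.1 k.isLt), rfl⟩
      · rintro ⟨m, hm, rfl⟩
        exact ⟨⟨m, Nat.lt_succ_of_le (Set.mem_Iic.mp hm)⟩, rfl⟩
    haveI : Fintype ↥(Submodule.span Fq (g '' Set.Iic i)) := Fintype.ofFinite _
    have hfr : Module.finrank Fq ↥(Submodule.span Fq (g '' Set.Iic i)) = i + 1 := by
      rw [← hrange, finrank_span_eq_card hw, Fintype.card_fin]
    have hc : Fintype.card ↥(Submodule.span Fq (g '' Set.Iic i)) = q ^ (i + 1) := by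
      rw [Module.card_eq_pow_finrank (K := Fq), hfr]
    rw [Set.Finite.card_toFinset]
    convert hc using 1
    exact Fintype.card_congr' rfl
  -- the product formula, for all i < n
  have hprod : ∀ i, i < n → Pirec q g i =
      ∏ u ∈ (Set.toFinite ((Submodule.span Fq (g '' Set.Iic i) : Submodule Fq F) : Set F)).toFinset,
        (X - C u) := by
    intro i hi
    obtain ⟨hm, hd⟩ := pirec_monic hq2 g i
    refine eq_prod_of_monic_of_roots _ _ hm ?_ ?_
    · rw [hd, hcardS i hi]
    · intro u hu
      rw [Set.Finite.mem_toFinset] at hu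
      refine IsLin.eval_span hadd hsc (pirec_isLin hqs g i) ?_ u hu
      rintro x ⟨m, hm', rfl⟩
      exact pirec_root hq1 g i m hm'
  have hnotmem : ∀ i, i + 1 < n → g (i + 1) ∉ Submodule.span Fq (g '' Set.Iic i) := by
    intro i hi
    have himg : (fun j : Fin n => g j) '' {j : Fin n | (j : ℕ) ≤ i} = g '' Set.Iic i := by
      ext x
      constructor
      · rintro ⟨j, hj, rfl⟩
        exact ⟨j, hj, rfl⟩
      · rintro ⟨m, hm, rfl⟩
        exact ⟨⟨m, lt_of_le_of_lt (Set.mem_Iic.mp hm) (by omega)⟩, hm, rfl⟩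
    have := hg.notMem_span_image (s := {j : Fin n | (j : ℕ) ≤ i}) (x := ⟨i + 1, hi⟩)
      (by simp)
    rwa [himg] at this
  have hPine : ∀ i, i + 1 < n → (Pirec q g i).eval (g (i + 1)) ≠ 0 := by
    intro i hi
    rw [hprod i (by omega), eval_prod]
    refine Finset.prod_ne_zero_iff.2 fun u hu => ?_
    rw [Set.Finite.mem_toFinset] at hu
    simp only [eval_sub, eval_X, eval_C]
    exact sub_ne_zero.2 fun h => hnotmem i hi (h ▸ hu)
  -- vanishing of an IsLin poly on the span given vanishing at the g j
  have hvanish : ∀ (D : Polynomial F) (i : ℕ), IsLin q D → (∀ j ≤ i, D.eval (g j) = 0) →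
      ∀ x ∈ Submodule.span Fq (g '' Set.Iic i), D.eval x = 0 := by
    intro D i hD h0
    refine IsLin.eval_span hadd hsc hD ?_
    rintro x ⟨m, hm', rfl⟩
    exact h0 m hm'
  -- uniqueness given the rest
  have huniq : ∀ i, i < n → ∀ Λ : Polynomial F, IsLin q Λ → Λ.natDegree ≤ q ^ i →
      (∀ j ≤ i, Λ.eval (g j) = r j) →
      ∀ L : Polynomial F, IsLin q L → L.natDegree ≤ q ^ i → (∀ j ≤ i, L.eval (g j) = r j) →
      L = Λ := by
    intro i hi Λ hΛlin hΛdeg hΛval L hLlin hLdeg hLval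
    by_contra hne
    have hDne : L - Λ ≠ 0 := sub_ne_zero.2 hne
    have hDlin : IsLin q (L - Λ) := hLlin.sub hΛlin
    have hDdeg : (L - Λ).natDegree ≤ q ^ i :=
      le_trans (natDegree_sub_le _ _) (max_le hLdeg hΛdeg)
    have hDval : ∀ x ∈ Submodule.span Fq (g '' Set.Iic i), (L - Λ).eval x = 0 := by
      refine hvanish _ i hDlin fun j hj => ?_
      rw [eval_sub, hLval j hj, hΛval j hj, sub_self]
    set S := (Set.toFinite ((Submodule.span Fq (g '' Set.Iic i) : Submodule Fq F) : Set F)).toFinset with hS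
    have hle : S.val ≤ (L - Λ).roots :=
      (Multiset.le_iff_subset S.nodup).2 fun a ha => mem_roots'.2 ⟨hDne,
        hDval a ((Set.Finite.mem_toFinset _).1 ha)⟩
    have hcard : q ^ (i + 1) ≤ q ^ i := by
      calc q ^ (i + 1) = S.card := (hcardS i hi).symm
        _ ≤ Multiset.card (L - Λ).roots := Multiset.card_le_card hle
        _ ≤ (L - Λ).natDegree := (L - Λ).card_roots'
        _ ≤ q ^ i := hDdeg
    have : q ^ i < q ^ (i + 1) := pow_lt_pow_right₀ (by omega) (by omega)
    omega
  -- main induction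
  intro i
  induction i with
  | zero =>
    intro hi
    have hg0 : g 0 ≠ 0 := by
      have := hg.ne_zero ⟨0, hi⟩
      simpa using this
    have hlam0 : Lamrec q g r 0 = C (r 0 / g 0) * X := rfl
    have hlin0 : IsLin q (Lamrec q g r 0) := by rw [hlam0]; exact isLin_X.C_mul _
    refine ⟨hprod 0 hi, hlin0, ?_, ?_, ?_⟩
    · rw [hlam0, pow_zero]
      exact le_trans (natDegree_C_mul_le _ _) (by rw [natDegree_X])
    · intro j hj
      rw [Nat.le_zero] at hj
      subst hj
      rw [hlam0, eval_mul, eval_C, eval_X, div_mul_cancel₀ _ hg0]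
    · intro L hLlin hLdeg hLval
      exact huniq 0 hi _ hlin0 (le_trans (natDegree_C_mul_le _ _)
        (by rw [natDegree_X, pow_zero])) (fun j hj => by
          rw [Nat.le_zero] at hj; subst hj
          rw [hlam0, eval_mul, eval_C, eval_X, div_mul_cancel₀ _ hg0]) L hLlin hLdeg hLval
  | succ i ih =>
    intro hi
    obtain ⟨_, hlinI, hdegI, hvalI, _⟩ := ih (by omega)
    have hPi0 := hPine i hi
    have hlam : Lamrec q g r (i + 1) = Lamrec q g r i -
        C (((Lamrec q g r i).eval (g (i + 1)) - r (i + 1)) / (Pirec q g i).eval (g (i + 1))) *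
          Pirec q g i := rfl
    have hlin : IsLin q (Lamrec q g r (i + 1)) := by
      rw [hlam]
      exact hlinI.sub ((pirec_isLin hqs g i).C_mul _)
    have hdeg : (Lamrec q g r (i + 1)).natDegree ≤ q ^ (i + 1) := by
      rw [hlam]
      refine le_trans (natDegree_sub_le _ _) (max_le ?_ ?_)
      · exact le_trans hdegI (Nat.pow_le_pow_right (by omega) (by omega))
      · refine le_trans (natDegree_C_mul_le _ _) ?_
        rw [(pirec_monic hq2 g i).2]
    have hval : ∀ j ≤ i + 1, (Lamrec q g r (i + 1)).eval (g j) = r j := by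
      intro j hj
      rw [hlam, eval_sub, eval_mul, eval_C]
      rcases Nat.lt_succ_iff_lt_or_eq.1 (Nat.lt_succ_of_le hj) with h | h
      · rw [pirec_root hq1 g i j (Nat.lt_succ_iff.1 h), mul_zero, sub_zero,
          hvalI j (Nat.lt_succ_iff.1 h)]
      · subst h
        rw [div_mul_cancel₀ _ hPi0]
        ring
    refine ⟨hprod (i + 1) hi, hlin, hdeg, hval, ?_⟩
    intro L hLlin hLdeg hLval
    exact huniq (i + 1) hi _ hlin hdeg hval L hLlin hLdeg hLval
end

section
/- Let g_1,...,g_n in F_{q^m} be F_q-linearly independent. The Gabidulin code C = {(m(g_1),...,m(g_n)) : m a q-linearized polynomial over F_{q^m} of q-degree < k} (for k <= n) has F_{q^m}-dimension k and minimum rank distance n - k + 1. -/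
open Polynomial

/-- The rank weight of a vector over the extension field: the `Fq`-dimension of the
span of its coordinates (equivalently, the `Fq`-rank of the associated matrix). -/
noncomputable def rankW (Fq : Type*) {F : Type*} [Field Fq] [Field F] [Algebra Fq F]
    {n : ℕ} (v : Fin n → F) : ℕ :=
  Module.finrank Fq (Submodule.span Fq (Set.range v))

set_option linter.unusedSectionVars false
set_option maxHeartbeats 1000000

section Aux
variable {Fq F : Type*} [Field Fq] [Fintype Fq] [Field F] [Fintype F] [Algebra Fq F]

lemma qpow_add (j : ℕ) (x y : F) :
    (x + y) ^ Fintype.card Fq ^ j = x ^ Fintype.card Fq ^ j + y ^ Fintype.card Fq ^ j := by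
  obtain ⟨p, hp⟩ := CharP.exists Fq
  haveI := hp
  obtain ⟨s, hps, hcard⟩ := FiniteField.card Fq p
  haveI : Fact p.Prime := ⟨hps⟩
  haveI : CharP F p := charP_of_injective_algebraMap (algebraMap Fq F).injective p
  rw [hcard, ← pow_mul, add_pow_char_pow]

lemma qpow_smul (j : ℕ) (c : Fq) (x : F) :
    (c • x) ^ Fintype.card Fq ^ j = c • x ^ Fintype.card Fq ^ j := by
  rw [Algebra.smul_def, Algebra.smul_def, mul_pow, ← map_pow, FiniteField.pow_card_pow]

/-- The `Fq`-linear map `x ↦ ∑_{j<k} coeff p (q^j) * x^(q^j)`. -/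
noncomputable def evalLin (Fq : Type*) {F : Type*} [Field Fq] [Fintype Fq] [Field F] [Fintype F]
    [Algebra Fq F] (k : ℕ) (p : Polynomial F) : F →ₗ[Fq] F where
  toFun x := ∑ j ∈ Finset.range k, p.coeff (Fintype.card Fq ^ j) * x ^ Fintype.card Fq ^ j
  map_add' x y := by
    rw [← Finset.sum_add_distrib]
    refine Finset.sum_congr rfl fun j _ => ?_
    rw [qpow_add, mul_add]
  map_smul' c x := by
    simp only [RingHom.id_apply]
    rw [Finset.smul_sum]
    refine Finset.sum_congr rfl fun j _ => ?_
    rw [qpow_smul, mul_smul_comm]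

lemma evalLin_eq {k : ℕ} {p : Polynomial F} (h1 : IsLin (Fintype.card Fq) p)
    (h2 : p.natDegree < Fintype.card Fq ^ k) (x : F) : evalLin Fq k p x = p.eval x := by
  have hq : 1 < Fintype.card Fq := Fintype.one_lt_card
  have hsub : p.support ⊆ (Finset.range k).image (fun j => Fintype.card Fq ^ j) := by
    intro e he
    obtain ⟨j, rfl⟩ := h1 e he
    have : Fintype.card Fq ^ j < Fintype.card Fq ^ k :=
      lt_of_le_of_lt (le_natDegree_of_mem_supp _ he) h2
    exact Finset.mem_image.mpr ⟨j, Finset.mem_range.mpr ((Nat.pow_lt_pow_iff_right hq).mp this), rfl⟩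
  rw [eval_eq_sum, Polynomial.sum]
  rw [Finset.sum_subset hsub (fun e _ hne => by
    simp [Polynomial.notMem_support_iff.mp hne])]
  rw [Finset.sum_image (fun a _ b _ h => Nat.pow_right_injective hq h)]
  rfl

lemma natDegree_le_of_isLin {k : ℕ} {p : Polynomial F} (hk : 0 < k) (hp : p ≠ 0)
    (h1 : IsLin (Fintype.card Fq) p) (h2 : p.natDegree < Fintype.card Fq ^ k) :
    p.natDegree ≤ Fintype.card Fq ^ (k - 1) := by
  have hq : 1 < Fintype.card Fq := Fintype.one_lt_card
  obtain ⟨j, hj⟩ := h1 _ (natDegree_mem_support_of_nonzero hp)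
  rw [hj] at h2 ⊢
  have : j < k := (Nat.pow_lt_pow_iff_right hq).mp h2
  exact Nat.pow_le_pow_right (le_of_lt hq) (by omega)

lemma ker_finrank_le {k : ℕ} {p : Polynomial F} (hk : 0 < k) (hp : p ≠ 0)
    (h1 : IsLin (Fintype.card Fq) p) (h2 : p.natDegree < Fintype.card Fq ^ k) :
    Module.finrank Fq (LinearMap.ker (evalLin Fq k p)) ≤ k - 1 := by
  classical
  have hq : 1 < Fintype.card Fq := Fintype.one_lt_card
  haveI : Fintype ↥(LinearMap.ker (evalLin Fq k p)) := Fintype.ofFinite _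
  have hmem : ∀ x : ↥(LinearMap.ker (evalLin Fq k p)), (x : F) ∈ p.roots.toFinset := by
    intro x
    have hx := x.2
    rw [LinearMap.mem_ker, evalLin_eq h1 h2] at hx
    exact Multiset.mem_toFinset.mpr (mem_roots'.mpr ⟨hp, hx⟩)
  have hcard1 : Fintype.card ↥(LinearMap.ker (evalLin Fq k p)) ≤ p.roots.toFinset.card := by
    rw [← Fintype.card_coe]
    exact Fintype.card_le_of_injective (fun x => ⟨x.1, hmem x⟩)
      (fun a b h => Subtype.ext (by simpa using h))
  have hcard2 : p.roots.toFinset.card ≤ Fintype.card Fq ^ (k - 1) :=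
    le_trans (Multiset.toFinset_card_le _)
      (le_trans (card_roots' p) (natDegree_le_of_isLin hk hp h1 h2))
  have hpows : Fintype.card Fq ^ Module.finrank Fq ↥(LinearMap.ker (evalLin Fq k p))
      ≤ Fintype.card Fq ^ (k - 1) := by
    rw [← Module.card_eq_pow_finrank (K := Fq)]
    exact le_trans hcard1 hcard2
  exact (Nat.pow_le_pow_iff_right hq).mp hpows

lemma rank_nullity_gab {n k : ℕ} (g : Fin n → F) (hg : LinearIndependent Fq g)
    {p : Polynomial F} (h1 : IsLin (Fintype.card Fq) p)
    (h2 : p.natDegree < Fintype.card Fq ^ k) :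
    rankW Fq (fun i => p.eval (g i)) +
      Module.finrank Fq (LinearMap.ker
        ((evalLin Fq k p).domRestrict (Submodule.span Fq (Set.range g)))) = n := by
  have h0 : (fun i => p.eval (g i)) = ⇑(evalLin Fq k p) ∘ g :=
    funext fun i => (evalLin_eq h1 h2 (g i)).symm
  have hS : Module.finrank Fq (Submodule.span Fq (Set.range g)) = n := by
    rw [finrank_span_eq_card hg, Fintype.card_fin]
  rw [rankW, h0, Set.range_comp, ← Submodule.map_span, ← LinearMap.range_domRestrict]
  rw [LinearMap.finrank_range_add_finrank_ker
    ((evalLin Fq k p).domRestrict (Submodule.span Fq (Set.range g))), hS]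

lemma kerres_le {k : ℕ} (S : Submodule Fq F) (p : Polynomial F) :
    Module.finrank Fq (LinearMap.ker ((evalLin Fq k p).domRestrict S)) ≤
      Module.finrank Fq (LinearMap.ker (evalLin Fq k p)) := by
  have hle : Submodule.map S.subtype (LinearMap.ker ((evalLin Fq k p).domRestrict S)) ≤
      LinearMap.ker (evalLin Fq k p) := by
    rintro x ⟨y, hy, rfl⟩
    simpa using hy
  calc Module.finrank Fq (LinearMap.ker ((evalLin Fq k p).domRestrict S))
      = Module.finrank Fq (Submodule.map S.subtype
          (LinearMap.ker ((evalLin Fq k p).domRestrict S))) :=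
        (Submodule.finrank_map_subtype_eq S _).symm
    _ ≤ _ := Submodule.finrank_mono hle

end Aux

section Gab
variable {F : Type*} [Field F]

/-- Evaluation of linearized polynomials with coefficient vector `a` at the points `g i`. -/
noncomputable def gabE (q k n : ℕ) (g : Fin n → F) : (Fin k → F) →ₗ[F] (Fin n → F) where
  toFun a i := ∑ j : Fin k, a j * g i ^ q ^ (j : ℕ)
  map_add' a b := by
    funext i
    simp [add_mul, Finset.sum_add_distrib]
  map_smul' r a := by
    funext i
    simp [Finset.mul_sum, mul_assoc]

noncomputable def gabP (q k : ℕ) (a : Fin k → F) : Polynomial F :=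
  ∑ j : Fin k, Polynomial.monomial (q ^ (j : ℕ)) (a j)

lemma gabP_coeff {q k : ℕ} (hq : 1 < q) (a : Fin k → F) (j : Fin k) :
    (gabP q k a).coeff (q ^ (j : ℕ)) = a j := by
  rw [gabP, finset_sum_coeff, Finset.sum_eq_single j]
  · rw [coeff_monomial, if_pos rfl]
  · intro b _ hbj
    rw [coeff_monomial, if_neg]
    intro h
    exact hbj (Fin.ext (Nat.pow_right_injective hq h))
  · intro h
    exact absurd (Finset.mem_univ j) h

lemma gabP_isLin {q k : ℕ} (a : Fin k → F) : IsLin q (gabP q k a) := by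
  intro e he
  by_contra hne
  push_neg at hne
  apply Polynomial.mem_support_iff.mp he
  rw [gabP, finset_sum_coeff]
  refine Finset.sum_eq_zero fun j _ => ?_
  rw [coeff_monomial, if_neg (fun h => hne (j : ℕ) h.symm)]

lemma gabP_natDegree {q k : ℕ} (hk : 0 < k) (hq : 1 < q) (a : Fin k → F) :
    (gabP q k a).natDegree < q ^ k := by
  have h1 : (gabP q k a).natDegree ≤ q ^ (k - 1) := by
    refine natDegree_sum_le_of_forall_le _ _ fun j _ => ?_
    refine le_trans (natDegree_monomial_le _) (Nat.pow_le_pow_right (le_of_lt hq) ?_)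
    omega
  exact lt_of_le_of_lt h1 (Nat.pow_lt_pow_right hq (by omega))

lemma gabP_eval {q k : ℕ} (a : Fin k → F) (x : F) :
    (gabP q k a).eval x = ∑ j : Fin k, a j * x ^ q ^ (j : ℕ) := by
  rw [gabP, eval_finset_sum]
  simp [eval_monomial]

lemma gabP_ne {q k : ℕ} (hq : 1 < q) {a : Fin k → F} (ha : a ≠ 0) : gabP q k a ≠ 0 := by
  intro h
  apply ha
  funext j
  have := gabP_coeff hq a j
  rw [h, coeff_zero] at this
  exact this.symm

end Gab

/-- The Gabidulin code `C = {(m(g 0),...,m(g (n-1))) : m q-linearized, qdeg m < k}`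
with `Fq`-linearly independent generators `g` is an `F`-linear subspace of `F^n`
of `F`-dimension `k` and minimum rank distance `n - k + 1`. -/
theorem stmt8 {Fq F : Type*} [Field Fq] [Fintype Fq] [Field F] [Fintype F] [Algebra Fq F]
    {n k : ℕ} (hk : 0 < k) (hkn : k ≤ n) (g : Fin n → F) (hg : LinearIndependent Fq g) :
    ∃ Cc : Submodule F (Fin n → F),
      (Cc : Set (Fin n → F)) =
        {c | ∃ p : Polynomial F, IsLin (Fintype.card Fq) p ∧
          p.natDegree < Fintype.card Fq ^ k ∧ c = fun i => p.eval (g i)} ∧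
      Module.finrank F Cc = k ∧
      (∀ c ∈ Cc, c ≠ 0 → n - k + 1 ≤ rankW Fq c) ∧
      (∃ c ∈ Cc, c ≠ 0 ∧ rankW Fq c = n - k + 1) := by
  classical
  have hq : 1 < Fintype.card Fq := Fintype.one_lt_card
  set q := Fintype.card Fq with hqd
  set S : Submodule Fq F := Submodule.span Fq (Set.range g) with hSd
  have hS : Module.finrank Fq S = n := by
    rw [hSd, finrank_span_eq_card hg, Fintype.card_fin]
  set E : (Fin k → F) →ₗ[F] (Fin n → F) := gabE q k n g with hEd
  -- evaluation identity
  have hEeval : ∀ (a : Fin k → F) (i : Fin n), E a i = (gabP q k a).eval (g i) := by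
    intro a i
    rw [gabP_eval]
    rfl
  -- a nonzero coefficient vector gives a polynomial vanishing nowhere on all of span g
  have hker_big : ∀ a : Fin k → F, a ≠ 0 → E a ≠ 0 := by
    intro a ha hEa
    set p := gabP q k a with hpd
    have hp : p ≠ 0 := gabP_ne hq ha
    have hlin := gabP_isLin (q := q) (k := k) a
    have hdeg := gabP_natDegree hk hq a
    have hle : S ≤ LinearMap.ker (evalLin Fq k p) := by
      rw [hSd, Submodule.span_le]
      rintro x ⟨i, rfl⟩
      rw [SetLike.mem_coe, LinearMap.mem_ker, evalLin_eq hlin hdeg, ← hEeval, hEa]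
      rfl
    have h1 : n ≤ Module.finrank Fq (LinearMap.ker (evalLin Fq k p)) := by
      rw [← hS]
      exact Submodule.finrank_mono hle
    have h2 := ker_finrank_le (Fq := Fq) hk hp hlin hdeg
    omega
  -- the kernel of E is trivial
  have hkerE : LinearMap.ker E = ⊥ := by
    rw [eq_bot_iff]
    intro a ha
    rw [LinearMap.mem_ker] at ha
    rw [Submodule.mem_bot]
    by_contra ha0
    exact hker_big a ha0 ha
  refine ⟨LinearMap.range E, ?_, ?_, ?_, ?_⟩
  · ext c
    simp only [SetLike.mem_coe, LinearMap.mem_range, Set.mem_setOf_eq]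
    constructor
    · rintro ⟨a, rfl⟩
      exact ⟨gabP q k a, gabP_isLin a, gabP_natDegree hk hq a, funext fun i => hEeval a i⟩
    · rintro ⟨p, h1, h2, rfl⟩
      refine ⟨fun j => p.coeff (q ^ (j : ℕ)), funext fun i => ?_⟩
      show ∑ j : Fin k, p.coeff (q ^ (j : ℕ)) * g i ^ q ^ (j : ℕ) = p.eval (g i)
      rw [Fin.sum_univ_eq_sum_range (fun j => p.coeff (q ^ j) * g i ^ q ^ j) k]
      exact evalLin_eq h1 h2 (g i)
  · have := LinearMap.finrank_range_add_finrank_ker E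
    rw [hkerE, finrank_bot, Module.finrank_pi, Fintype.card_fin] at this
    omega
  · rintro c ⟨a, rfl⟩ hc0
    have ha0 : a ≠ 0 := by rintro rfl; exact hc0 (map_zero E)
    have hlin := gabP_isLin (q := q) (k := k) a
    have hdeg := gabP_natDegree hk hq a
    have hrn := rank_nullity_gab (k := k) g hg hlin hdeg
    have hd : Module.finrank Fq (LinearMap.ker
        ((evalLin Fq k (gabP q k a)).domRestrict (Submodule.span Fq (Set.range g)))) ≤ k - 1 :=
      le_trans (kerres_le _ _) (ker_finrank_le hk (gabP_ne hq ha0) hlin hdeg)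
    have hEc : E a = fun i => (gabP q k a).eval (g i) := funext fun i => hEeval a i
    rw [hEc]
    omega
  · -- existence of a codeword of weight exactly n - k + 1
    have hkn' : k - 1 ≤ n := by omega
    set g' : Fin (k - 1) → F := fun i => g (Fin.castLE hkn' i) with hg'd
    set E' : (Fin k → F) →ₗ[F] (Fin (k - 1) → F) := gabE q k (k - 1) g' with hE'd
    -- find a nonzero coefficient vector vanishing on g' 
    have hrk := LinearMap.finrank_range_add_finrank_ker E'
    rw [Module.finrank_pi, Fintype.card_fin] at hrk
    have hr1 : Module.finrank F (LinearMap.range E') ≤ k - 1 := by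
      refine le_trans (Submodule.finrank_le _) ?_
      rw [Module.finrank_pi, Fintype.card_fin]
    have hkerne : LinearMap.ker E' ≠ ⊥ := by
      intro h
      rw [h, finrank_bot] at hrk
      omega
    obtain ⟨a, haker, ha0⟩ := Submodule.exists_mem_ne_zero_of_ne_bot hkerne
    rw [LinearMap.mem_ker] at haker
    have hlin := gabP_isLin (q := q) (k := k) a
    have hdeg := gabP_natDegree hk hq a
    have hp0 : gabP q k a ≠ 0 := gabP_ne hq ha0
    -- vanishing at the first k-1 points
    have hvan : ∀ i : Fin (k - 1), (gabP q k a).eval (g' i) = 0 := by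
      intro i
      have := congrFun haker i
      rw [gabP_eval]
      exact this
    -- the restricted kernel has dimension exactly k - 1
    have hd1 : Module.finrank Fq (LinearMap.ker
        ((evalLin Fq k (gabP q k a)).domRestrict (Submodule.span Fq (Set.range g)))) ≤ k - 1 :=
      le_trans (kerres_le _ _) (ker_finrank_le hk hp0 hlin hdeg)
    have hd2 : k - 1 ≤ Module.finrank Fq (LinearMap.ker
        ((evalLin Fq k (gabP q k a)).domRestrict (Submodule.span Fq (Set.range g)))) := by
      have hmemS : ∀ i : Fin (k - 1), g' i ∈ Submodule.span Fq (Set.range g) :=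
        fun i => Submodule.subset_span ⟨Fin.castLE hkn' i, rfl⟩
      have hmemK : ∀ i : Fin (k - 1),
          ((evalLin Fq k (gabP q k a)).domRestrict (Submodule.span Fq (Set.range g)))
            ⟨g' i, hmemS i⟩ = 0 := by
        intro i
        rw [LinearMap.domRestrict_apply, evalLin_eq hlin hdeg]
        exact hvan i
      set v : Fin (k - 1) → ↥(LinearMap.ker
          ((evalLin Fq k (gabP q k a)).domRestrict (Submodule.span Fq (Set.range g)))) :=
        fun i => ⟨⟨g' i, hmemS i⟩, LinearMap.mem_ker.mpr (hmemK i)⟩ with hvd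
    --
      have hli : LinearIndependent Fq v := by
        apply LinearIndependent.of_comp ((Submodule.span Fq (Set.range g)).subtype.comp
          (LinearMap.ker ((evalLin Fq k (gabP q k a)).domRestrict
            (Submodule.span Fq (Set.range g)))).subtype)
        have hcomp : (⇑((Submodule.span Fq (Set.range g)).subtype.comp
            (LinearMap.ker ((evalLin Fq k (gabP q k a)).domRestrict
              (Submodule.span Fq (Set.range g)))).subtype) ∘ v) = g ∘ Fin.castLE hkn' := rfl
        rw [hcomp]
        exact hg.comp _ (Fin.castLE_injective hkn')
      have := hli.fintype_card_le_finrank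
      rwa [Fintype.card_fin] at this
    have hrn := rank_nullity_gab (k := k) g hg hlin hdeg
    refine ⟨E a, ⟨a, rfl⟩, ?_, ?_⟩
    · intro h
      have hz : Submodule.span Fq (Set.range (0 : Fin n → F)) = ⊥ := by
        rw [Submodule.span_eq_bot]
        rintro x ⟨i, rfl⟩
        rfl
      have hr0 : rankW Fq (0 : Fin n → F) = 0 := by
        rw [rankW, hz, finrank_bot]
      have hEc : E a = fun i => (gabP q k a).eval (g i) := funext fun i => hEeval a i
      rw [h] at hEc
      rw [← hEc, hr0] at hrn
      omega
    · have hEc : E a = fun i => (gabP q k a).eval (g i) := funext fun i => hEeval a i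
      rw [hEc]
      omega
end

section
/- Let g_1,...,g_n be F_q-linearly independent in F_{q^m} and r in F_{q^m}^n. A pair (f(x), g(x)) of q-linearized polynomials satisfies f(g_i) + g(r_i) = 0 for all i = 1,...,n if and only if there exist q-linearized polynomials beta(x), gamma(x) such that f(x) = beta(Pi_g(x)) - gamma(Lambda_{g,r}(x)) and g(x) = gamma(x), where Pi_g is the q-annihilator polynomial of span(g_1,...,g_n) and Lambda_{g,r} is the q-Lagrange polynomial interpolating r_i at g_i. -/
open Polynomial

namespace Stmt12Aux
open Polynomial Finset

variable {F : Type*} [Field F] {q p k : ℕ} [Fact p.Prime] [CharP F p]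

theorem qpow (hq : q = p ^ k) (j : ℕ) : q ^ j = p ^ (k * j) := by
  rw [hq, ← pow_mul]

theorem frob_add {R : Type*} [CommRing R] [CharP R p] (hq : q = p ^ k) (a b : R) (j : ℕ) :
    (a + b) ^ q ^ j = a ^ q ^ j + b ^ q ^ j := by
  rw [qpow hq]; exact add_pow_char_pow ..

theorem frob_sub {R : Type*} [CommRing R] [CharP R p] (hq : q = p ^ k) (a b : R) (j : ℕ) :
    (a - b) ^ q ^ j = a ^ q ^ j - b ^ q ^ j := by
  rw [qpow hq]; exact sub_pow_char_pow ..

theorem frob_sum {R : Type*} [CommRing R] [CharP R p] (hq : q = p ^ k) {ι : Type*}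
    (s : Finset ι) (f : ι → R) (j : ℕ) :
    (∑ i ∈ s, f i) ^ q ^ j = ∑ i ∈ s, f i ^ q ^ j := by
  rw [qpow hq]; exact sum_pow_char_pow ..

theorem lin_zero : IsLin q (0 : F[X]) := by simp [IsLin]

theorem lin_X : IsLin q (X : F[X]) := fun i hi => by
  refine ⟨0, ?_⟩
  have : i ∈ ({1} : Finset ℕ) := by
    rw [← Polynomial.support_X (R := F)]; exact hi
  rw [Finset.mem_singleton] at this
  rw [this, pow_zero]

theorem lin_monomial (c : F) (j : ℕ) : IsLin q (C c * X ^ (q ^ j)) := by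
  intro i hi
  have := support_C_mul_X_pow' (q ^ j) c hi
  rw [Finset.mem_singleton] at this
  exact ⟨j, this⟩

theorem lin_add {f g : F[X]} (hf : IsLin q f) (hg : IsLin q g) : IsLin q (f + g) := by
  intro i hi
  rcases Finset.mem_union.1 (support_add hi) with h | h
  exacts [hf i h, hg i h]

theorem lin_neg {f : F[X]} (hf : IsLin q f) : IsLin q (-f) := by
  intro i hi; rw [support_neg] at hi; exact hf i hi

theorem lin_sub {f g : F[X]} (hf : IsLin q f) (hg : IsLin q g) : IsLin q (f - g) := by
  rw [sub_eq_add_neg]; exact lin_add hf (lin_neg hg)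

theorem lin_Cmul {f : F[X]} (a : F) (hf : IsLin q f) : IsLin q (C a * f) := by
  intro i hi
  rw [← smul_eq_C_mul] at hi
  exact hf i (support_smul a f hi)

theorem lin_sum {ι : Type*} (s : Finset ι) (f : ι → F[X]) (h : ∀ i ∈ s, IsLin q (f i)) :
    IsLin q (∑ i ∈ s, f i) := by
  classical
  induction s using Finset.induction_on with
  | empty => simpa using (lin_zero (q := q))
  | @insert _ _ ha ih =>
    rw [Finset.sum_insert ha]
    exact lin_add (h _ (Finset.mem_insert_self _ _))
      (ih fun i hi => h i (Finset.mem_insert_of_mem hi))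

theorem lin_pow (hq : q = p ^ k) {f : F[X]} (hf : IsLin q f) (j : ℕ) :
    IsLin q (f ^ q ^ j) := by
  conv in f ^ _ => rw [f.as_sum_support_C_mul_X_pow]
  rw [frob_sum hq]
  refine lin_sum _ _ fun i hi => ?_
  obtain ⟨a, rfl⟩ := hf i hi
  rw [mul_pow, ← C_pow, ← pow_mul, ← pow_add]
  exact lin_monomial _ _

theorem lin_comp (hq : q = p ^ k) {f g : F[X]} (hf : IsLin q f) (hg : IsLin q g) :
    IsLin q (f.comp g) := by
  rw [comp_eq_sum_left, Polynomial.sum]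
  refine lin_sum _ _ fun i hi => ?_
  obtain ⟨j, rfl⟩ := hf i hi
  exact lin_Cmul _ (lin_pow hq hg j)

theorem eval_add_of_lin (hq : q = p ^ k) {f : F[X]} (hf : IsLin q f) (a b : F) :
    f.eval (a + b) = f.eval a + f.eval b := by
  rw [eval_eq_sum, eval_eq_sum, eval_eq_sum, Polynomial.sum, Polynomial.sum, Polynomial.sum,
    ← Finset.sum_add_distrib]
  refine Finset.sum_congr rfl fun i hi => ?_
  obtain ⟨j, rfl⟩ := hf i hi
  rw [frob_add hq, mul_add]

theorem pow_q_eq {c : F} (hc : c ^ q = c) (j : ℕ) : c ^ q ^ j = c := by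
  induction j with
  | zero => simp
  | succ j ih => rw [pow_succ, pow_mul, ih, hc]

theorem eval_smul_of_lin {f : F[X]} (hf : IsLin q f) {c : F} (hc : c ^ q = c) (x : F) :
    f.eval (c * x) = c * f.eval x := by
  rw [eval_eq_sum, eval_eq_sum, Polynomial.sum, Polynomial.sum, Finset.mul_sum]
  refine Finset.sum_congr rfl fun i hi => ?_
  obtain ⟨j, rfl⟩ := hf i hi
  rw [mul_pow, pow_q_eq hc]; ring

theorem eval_zero_of_lin (hq : q = p ^ k) {f : F[X]} (hf : IsLin q f) : f.eval 0 = 0 := by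
  rw [← coeff_zero_eq_eval_zero]
  by_contra h
  obtain ⟨j, hj⟩ := hf 0 (mem_support_iff.2 h)
  have : 0 < q ^ j := by
    have : 0 < q := by
      rw [hq]; exact pow_pos (Fact.out (p := p.Prime)).pos k
    positivity
  omega

theorem comp_X_sub_C_of_lin (hq : q = p ^ k) {L : F[X]} (hL : IsLin q L) (a : F) :
    L.comp (X - C a) = L - C (L.eval a) := by
  conv_lhs => rw [L.as_sum_support_C_mul_X_pow]
  rw [Polynomial.sum_comp]
  have : ∀ i ∈ L.support, (C (L.coeff i) * X ^ i).comp (X - C a)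
      = C (L.coeff i) * X ^ i - C (L.coeff i * a ^ i) := by
    intro i hi
    obtain ⟨j, rfl⟩ := hL i hi
    rw [mul_comp, C_comp, pow_comp, X_comp, frob_sub hq, ← C_pow, mul_sub, ← C_mul]
  rw [Finset.sum_congr rfl this, Finset.sum_sub_distrib, ← L.as_sum_support_C_mul_X_pow,
    ← map_sum C]
  congr 1
  rw [eval_eq_sum, Polynomial.sum]

end Stmt12Aux

namespace Stmt12Aux
open Polynomial Finset

section Prod
variable {F : Type*} [Field F]

theorem prod_monic (T : Finset F) : (∏ u ∈ T, (X - C u)).Monic :=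
  monic_prod_of_monic _ _ fun u _ => monic_X_sub_C u

theorem prod_natDegree (T : Finset F) : (∏ u ∈ T, (X - C u)).natDegree = T.card := by
  rw [natDegree_prod _ _ fun u _ => X_sub_C_ne_zero u]
  simp

theorem prod_eval_eq_zero_iff (T : Finset F) (x : F) :
    (∏ u ∈ T, (X - C u)).eval x = 0 ↔ x ∈ T := by
  rw [eval_prod, Finset.prod_eq_zero_iff]
  constructor
  · rintro ⟨u, hu, h⟩
    simp only [eval_sub, eval_X, eval_C, sub_eq_zero] at h
    rwa [h]
  · intro hx
    exact ⟨x, hx, by simp⟩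

end Prod

section WithFq
variable {Fq F : Type*} [Field Fq] [Fintype Fq] [Field F] [Fintype F] [Algebra Fq F]
variable {p k : ℕ} [Fact p.Prime] [CharP F p]

theorem alg_pow_q (c : Fq) :
    (algebraMap Fq F c) ^ (Fintype.card Fq) = algebraMap Fq F c := by
  rw [← map_pow, FiniteField.pow_card]

theorem eval_span_zero (hq : Fintype.card Fq = p ^ k) {φ : F[X]}
    (hφ : IsLin (Fintype.card Fq) φ)
    {n : ℕ} {g : Fin n → F} (h0 : ∀ i, φ.eval (g i) = 0) :
    ∀ v ∈ Submodule.span Fq (Set.range g), φ.eval v = 0 := by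
  intro v hv
  induction hv using Submodule.span_induction with
  | mem x hx => obtain ⟨i, rfl⟩ := hx; exact h0 i
  | zero => exact eval_zero_of_lin hq hφ
  | add x y _ _ hx hy => rw [eval_add_of_lin hq hφ, hx, hy, add_zero]
  | smul c x _ hx => rw [Algebra.smul_def, eval_smul_of_lin hφ (alg_pow_q c), hx, mul_zero]

theorem card_span {n : ℕ} {g : Fin n → F} (hg : LinearIndependent Fq g) :
    (Set.toFinite ((Submodule.span Fq (Set.range g) : Submodule Fq F) : Set F)).toFinset.card
      = Fintype.card Fq ^ n := by
  classical
  rw [Set.Finite.card_toFinset]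
  have h1 : Fintype.card ↥((Submodule.span Fq (Set.range g) : Submodule Fq F) : Set F)
      = Fintype.card ↥(Submodule.span Fq (Set.range g)) := rfl
  rw [h1, Module.card_eq_pow_finrank (K := Fq), finrank_span_eq_card hg, Fintype.card_fin]

end WithFq
end Stmt12Aux

namespace Stmt12Aux
open Polynomial Finset

section ProdFq
variable {Fq F : Type*} [Field Fq] [Fintype Fq] [Field F] [Fintype F] [Algebra Fq F]
variable {p k : ℕ} [Fact p.Prime] [CharP F p]

theorem q_pos : 0 < Fintype.card Fq := Fintype.card_pos

theorem one_lt_q : 1 < Fintype.card Fq := Fintype.one_lt_card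

/-- The scaled line polynomial identity. -/
theorem prod_line (t : F) (ht : t ≠ 0) :
    ∏ c : Fq, (X - C (algebraMap Fq F c * t))
      = X ^ (Fintype.card Fq) - C (t ^ (Fintype.card Fq - 1)) * X := by
  classical
  set q := Fintype.card Fq with hqdef
  set A : F[X] := X ^ q - C (t ^ (q - 1)) * X with hA
  have hqq : (1 : WithBot ℕ) < (q : WithBot ℕ) := by
    exact_mod_cast one_lt_q (Fq := Fq)
  have hdeglt : (C (t ^ (q - 1)) * X).degree < ((X : F[X]) ^ q).degree := by
    rw [degree_X_pow]
    exact lt_of_le_of_lt (degree_C_mul_X_le _) hqq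
  have hAmonic : A.Monic := monic_X_pow_sub (by rwa [degree_X_pow] at hdeglt)
  have hAdeg : A.natDegree = q := by
    rw [hA, natDegree_sub_eq_left_of_natDegree_lt, natDegree_X_pow]
    rw [natDegree_X_pow]
    calc (C (t ^ (q - 1)) * X).natDegree ≤ 1 := natDegree_C_mul_le _ _ |>.trans (by simp)
    _ < q := one_lt_q
  have hinj : Function.Injective (fun c : Fq => algebraMap Fq F c * t) := by
    intro a b hab
    simp only [mul_eq_mul_right_iff, ht, or_false] at hab
    exact (algebraMap Fq F).injective hab
  set S : Finset F := Finset.univ.image (fun c : Fq => algebraMap Fq F c * t) with hS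
  have hScard : S.card = q := by
    rw [hS, Finset.card_image_of_injective _ hinj, Finset.card_univ]
  have hroot : ∀ a ∈ S, A.eval a = 0 := by
    rintro a ha
    rw [hS, Finset.mem_image] at ha
    obtain ⟨c, -, rfl⟩ := ha
    have h1 : (algebraMap Fq F c * t) ^ q = algebraMap Fq F c * t ^ q := by
      rw [mul_pow, alg_pow_q]
    have h1q : 1 ≤ q := (one_lt_q (Fq := Fq)).le
    have h2 : t ^ (q - 1) * t = t ^ q := by
      rw [← pow_succ]
      congr 1
      omega
    simp only [hA, eval_sub, eval_pow, eval_X, eval_mul, eval_C, h1]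
    linear_combination (algebraMap Fq F c) * h2.symm
  set B : F[X] := ∏ a ∈ S, (X - C a) with hB
  have hBmonic : B.Monic := prod_monic S
  have hBdeg : B.natDegree = q := by rw [hB, prod_natDegree, hScard]
  have hD : A - B = 0 := by
    rcases eq_or_ne (A - B) 0 with h | h
    · exact h
    have hdeg : (A - B).natDegree < q := by
      have : (A - B).degree < A.degree := by
        apply degree_sub_lt _ (hAmonic.ne_zero)
        · rw [hAmonic.leadingCoeff, hBmonic.leadingCoeff]
        · rw [degree_eq_natDegree hAmonic.ne_zero, degree_eq_natDegree hBmonic.ne_zero, hAdeg, hBdeg]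
      have := natDegree_lt_natDegree h this
      rwa [hAdeg] at this
    refine absurd (eq_zero_of_natDegree_lt_card_of_eval_eq_zero' (A - B) S ?_ ?_) h
    · intro a ha
      rw [eval_sub, hroot a ha, (prod_eval_eq_zero_iff S a).2 ha, sub_zero]
    · rwa [hScard]
  have hAB : A = B := by linear_combination hD
  rw [hAB, hB, hS, Finset.prod_image (fun a _ b _ h => hinj h)]

end ProdFq
end Stmt12Aux

namespace Stmt12Aux
open Polynomial Finset

section Plin
variable {Fq F : Type*} [Field Fq] [Fintype Fq] [Field F] [Fintype F] [Algebra Fq F]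
variable {p k : ℕ} [Fact p.Prime] [CharP F p]

theorem lin_prod_span (hq : Fintype.card Fq = p ^ k) :
    ∀ (n : ℕ) (g : Fin n → F), LinearIndependent Fq g →
      IsLin (Fintype.card Fq)
        (∏ u ∈ (Set.toFinite ((Submodule.span Fq (Set.range g) : Submodule Fq F) : Set F)).toFinset,
          (X - C u)) := by
  intro n
  induction n with
  | zero =>
    intro g _
    have h1 : (Set.range g) = (∅ : Set F) := Set.range_eq_empty g
    have hT : (Set.toFinite ((Submodule.span Fq (Set.range g) : Submodule Fq F) : Set F)).toFinset
        = {0} := by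
      ext x
      rw [Set.Finite.mem_toFinset, Finset.mem_singleton]
      rw [h1, Submodule.span_empty]
      simp
    rw [hT, Finset.prod_singleton, C_0, sub_zero]
    exact lin_X
  | succ n ih =>
    intro g hg
    set w := g 0 with hw
    set g' : Fin n → F := g ∘ Fin.succ with hg'def
    have hg' : LinearIndependent Fq g' := hg.comp Fin.succ (Fin.succ_injective n)
    set V' := Submodule.span Fq (Set.range g') with hV'
    set T' := (Set.toFinite (V' : Set F)).toFinset with hT'def
    set P' := ∏ u ∈ T', (X - C u) with hP'
    have ihP : IsLin (Fintype.card Fq) P' := ih g' hg'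
    have hwV' : w ∉ V' := by
      have h0 : (0 : Fin (n+1)) ∉ Set.range (Fin.succ : Fin n → Fin (n+1)) := by
        rintro ⟨i, hi⟩; exact (Fin.succ_ne_zero i) hi
      have h2 := hg.notMem_span_image h0
      rwa [← Set.range_comp] at h2
    set t := P'.eval w with htdef
    have htne : t ≠ 0 := by
      intro h0
      exact hwV' ((Set.Finite.mem_toFinset _).1 ((prod_eval_eq_zero_iff T' w).1 h0))
    have hrange : Set.range g = insert w (Set.range g') := by
      ext x
      constructor
      · rintro ⟨i, rfl⟩
        rcases Fin.eq_zero_or_eq_succ i with h | ⟨j, rfl⟩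
        · rw [h]; exact Set.mem_insert _ _
        · exact Set.mem_insert_of_mem _ ⟨j, rfl⟩
      · rintro (rfl | ⟨j, rfl⟩)
        exacts [⟨0, rfl⟩, ⟨j.succ, rfl⟩]
    have hspan : Submodule.span Fq (Set.range g) = Submodule.span Fq {w} ⊔ V' := by
      rw [hrange, Submodule.span_insert]
    set T := (Set.toFinite
      ((Submodule.span Fq (Set.range g) : Submodule Fq F) : Set F)).toFinset with hTdef
    have hmemT : ∀ x : F, x ∈ T ↔ x ∈ Submodule.span Fq (Set.range g) := fun x =>
      Set.Finite.mem_toFinset _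
    have hmemT' : ∀ x : F, x ∈ T' ↔ x ∈ V' := fun x => Set.Finite.mem_toFinset _
    have key : ∏ u ∈ T, (X - C u)
        = ∏ cv ∈ (Finset.univ : Finset Fq) ×ˢ T', (X - C (cv.1 • w + cv.2)) := by
      refine (Finset.prod_nbij (fun cv => cv.1 • w + cv.2) ?_ ?_ ?_ ?_).symm
      · rintro ⟨c, v⟩ hcv
        rw [Finset.mem_product] at hcv
        rw [hmemT, hspan]
        exact Submodule.add_mem_sup
          (Submodule.smul_mem _ c (Submodule.mem_span_singleton_self w))
          ((hmemT' v).1 hcv.2)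
      · rintro ⟨c1, v1⟩ h1 ⟨c2, v2⟩ h2 heq
        simp only [Finset.coe_product, Set.mem_prod, Finset.mem_coe] at h1 h2
        simp only at heq
        have hc : c1 = c2 := by
          by_contra hne
          have hsub : (c1 - c2) • w = v2 - v1 := by
            rw [sub_smul]
            have : c1 • w + v1 = c2 • w + v2 := heq
            linear_combination this
          have hv : v2 - v1 ∈ V' := Submodule.sub_mem _ ((hmemT' v2).1 h2.2) ((hmemT' v1).1 h1.2)
          have : w ∈ V' := by
            have h3 : w = (c1 - c2)⁻¹ • ((c1 - c2) • w) := by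
              rw [inv_smul_smul₀ (sub_ne_zero.2 hne)]
            rw [h3, hsub]
            exact Submodule.smul_mem _ _ hv
          exact hwV' this
        subst hc
        have hv : v1 = v2 := add_left_cancel heq
        rw [hv]
      · intro x hx
        rw [Finset.mem_coe, hmemT, hspan] at hx
        obtain ⟨y, hy, z, hz, rfl⟩ := Submodule.mem_sup.1 hx
        obtain ⟨c, rfl⟩ := Submodule.mem_span_singleton.1 hy
        exact ⟨(c, z), by
          simp only [Finset.coe_product, Set.mem_prod, Finset.mem_coe]
          exact ⟨Finset.mem_univ c, (hmemT' z).2 hz⟩, rfl⟩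
      · intro a _
        rfl
    have hinner : ∀ c : Fq, (∏ v ∈ T', (X - C (c • w + v))) = P' - C (algebraMap Fq F c * t) := by
      intro c
      have h1 : (∏ v ∈ T', (X - C (c • w + v))) = P'.comp (X - C (c • w)) := by
        rw [hP', Polynomial.prod_comp]
        refine Finset.prod_congr rfl fun v hv => ?_
        rw [sub_comp, X_comp, C_comp, C_add]
        ring
      rw [h1, comp_X_sub_C_of_lin hq ihP]
      congr 2
      rw [Algebra.smul_def, eval_smul_of_lin ihP (alg_pow_q c), htdef]
    have hfinal : ∏ u ∈ T, (X - C u)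
        = P' ^ (Fintype.card Fq) - C (t ^ (Fintype.card Fq - 1)) * P' := by
      rw [key, Finset.prod_product]
      calc ∏ c : Fq, ∏ v ∈ T', (X - C ((c, v).1 • w + (c, v).2))
          = ∏ c : Fq, (P' - C (algebraMap Fq F c * t)) := by
            exact Finset.prod_congr rfl fun c _ => hinner c
        _ = P' ^ (Fintype.card Fq) - C (t ^ (Fintype.card Fq - 1)) * P' := by
            have h2 := congrArg (fun A : F[X] => A.comp P') (prod_line (Fq := Fq) t htne)
            simpa only [Polynomial.prod_comp, sub_comp, X_comp, C_comp, pow_comp,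
              mul_comp] using h2
    rw [hfinal]
    refine lin_sub ?_ (lin_Cmul _ ihP)
    have h3 := lin_pow (p := p) (k := k) hq ihP 1
    rwa [pow_one] at h3

end Plin
end Stmt12Aux

namespace Stmt12Aux
open Polynomial Finset

section Div
variable {F : Type*} [Field F] {q p k : ℕ} [Fact p.Prime] [CharP F p]

theorem div_lemma (hq : q = p ^ k) (hq1 : 1 < q) {n : ℕ} {P : F[X]}
    (hP : IsLin q P) (hPm : P.Monic) (hPd : P.natDegree = q ^ n) :
    ∀ (d : ℕ) (φ : F[X]), φ.natDegree ≤ d → IsLin q φ →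
      ∃ β ρ : F[X], IsLin q β ∧ IsLin q ρ ∧ φ = β.comp P + ρ ∧ ρ.natDegree < q ^ n := by
  intro d
  induction d using Nat.strong_induction_on with
  | _ d IH =>
    intro φ hφd hφ
    by_cases hlt : φ.natDegree < q ^ n
    · exact ⟨0, φ, lin_zero, hφ, by simp, hlt⟩
    push_neg at hlt
    have hqn0 : 0 < q ^ n := pow_pos (lt_trans zero_lt_one hq1) n
    have hφ0 : φ ≠ 0 := by
      rintro rfl
      rw [natDegree_zero] at hlt
      omega
    obtain ⟨m, hm⟩ := hφ φ.natDegree (natDegree_mem_support_of_nonzero hφ0)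
    have hnm : n ≤ m := by
      rw [hm] at hlt
      exact (Nat.pow_le_pow_iff_right hq1).1 hlt
    set e := m - n with he
    set Q := P ^ (q ^ e) with hQ
    have hQ0 : Q ≠ 0 := (hPm.pow _).ne_zero
    have hQd : Q.natDegree = q ^ m := by
      rw [hQ, natDegree_pow, hPd, ← pow_add]
      congr 1
      omega
    set c := φ.leadingCoeff with hc
    have hc0 : c ≠ 0 := leadingCoeff_ne_zero.2 hφ0
    set φ' := φ - C c * Q with hφ'
    have hlin' : IsLin q φ' := lin_sub hφ (lin_Cmul _ (lin_pow hq hP e))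
    have hCQ0 : C c * Q ≠ 0 := mul_ne_zero (by simpa using hc0) hQ0
    have hCQdeg : (C c * Q).natDegree = φ.natDegree := by
      rw [natDegree_C_mul hc0, hQd, hm]
    have hdlt : φ'.natDegree < φ.natDegree := by
      rcases eq_or_ne φ' 0 with h | h
      · rw [h, natDegree_zero, hm]
        exact pow_pos (lt_trans zero_lt_one hq1) m
      · apply natDegree_lt_natDegree h
        apply degree_sub_lt
        · rw [degree_eq_natDegree hφ0, degree_eq_natDegree hCQ0, hCQdeg]
        · exact hφ0
        · rw [leadingCoeff_mul, leadingCoeff_C, (hPm.pow _).leadingCoeff, mul_one]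
    obtain ⟨β', ρ, hβ'lin, hρlin, heq, hρdeg⟩ :=
      IH φ'.natDegree (lt_of_lt_of_le hdlt hφd) φ' le_rfl hlin'
    refine ⟨β' + C c * X ^ (q ^ e), ρ, lin_add hβ'lin (lin_monomial _ _), hρlin, ?_, hρdeg⟩
    rw [add_comp, mul_comp, C_comp, X_pow_comp]
    have hsplit : φ = φ' + C c * Q := by rw [hφ']; ring
    rw [hsplit, heq, hQ]
    ring

end Div
end Stmt12Aux

/-- A pair `(f, h)` of `q`-linearized polynomials satisfies `f(g i) + h(r i) = 0` for
all `i` iff there are `q`-linearized `β, γ` with `f = β ∘ Π_g - γ ∘ Λ_{g,r}` and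
`h = γ`, where `Π_g` is the `q`-annihilator polynomial of the span of the `g i` and
`Λ_{g,r}` is the `q`-Lagrange polynomial (the `q`-linearized interpolant of `q`-degree
at most `n - 1` with `Λ(g i) = r i`). -/

theorem stmt12 {Fq F : Type*} [Field Fq] [Fintype Fq] [Field F] [Fintype F] [Algebra Fq F]
    {n : ℕ} (g : Fin n → F) (hg : LinearIndependent Fq g) (r : Fin n → F)
    (Pig : Polynomial F)
    (hPig : Pig =
      ∏ u ∈ (Set.toFinite ((Submodule.span Fq (Set.range g) : Submodule Fq F) : Set F)).toFinset,
        (X - C u))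
    (Lam : Polynomial F) (hLamLin : IsLin (Fintype.card Fq) Lam)
    (hLamDeg : Lam.natDegree < Fintype.card Fq ^ n)
    (hLam : ∀ i, Lam.eval (g i) = r i)
    (f h : Polynomial F) (hf : IsLin (Fintype.card Fq) f) (hh : IsLin (Fintype.card Fq) h) :
    (∀ i, f.eval (g i) + h.eval (r i) = 0) ↔
      ∃ β γ : Polynomial F, IsLin (Fintype.card Fq) β ∧ IsLin (Fintype.card Fq) γ ∧
        f = β.comp Pig - γ.comp Lam ∧ h = γ := by
  classical
  open Stmt12Aux in
  set p := ringChar Fq with hpdef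
  haveI hfact : Fact p.Prime := ⟨CharP.char_is_prime Fq p⟩
  haveI : CharP F p := charP_of_injective_algebraMap (algebraMap Fq F).injective p
  obtain ⟨k, hpk, hq⟩ := FiniteField.card Fq p
  have hq1 : 1 < Fintype.card Fq := Fintype.one_lt_card
  set T := (Set.toFinite
    ((Submodule.span Fq (Set.range g) : Submodule Fq F) : Set F)).toFinset with hTdef
  have hPigLin : IsLin (Fintype.card Fq) Pig := by
    rw [hPig]; exact lin_prod_span hq n g hg
  have hPigMonic : Pig.Monic := by rw [hPig]; exact prod_monic _
  have hPigDeg : Pig.natDegree = Fintype.card Fq ^ n := by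
    rw [hPig, prod_natDegree, hTdef]
    exact card_span hg
  have hPigEvalT : ∀ u ∈ T, Pig.eval u = 0 := by
    intro u hu
    rw [hPig]
    exact (prod_eval_eq_zero_iff _ u).2 hu
  have hPigEval : ∀ i, Pig.eval (g i) = 0 := by
    intro i
    exact hPigEvalT _ ((Set.Finite.mem_toFinset _).2
      (Submodule.subset_span (Set.mem_range_self i)))
  constructor
  · intro hzero
    set φ := f + h.comp Lam with hφdef
    have hφlin : IsLin (Fintype.card Fq) φ := lin_add hf (lin_comp hq hh hLamLin)
    have hφeval : ∀ i, φ.eval (g i) = 0 := by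
      intro i
      rw [hφdef, eval_add, eval_comp, hLam i]
      exact hzero i
    obtain ⟨β, ρ, hβlin, hρlin, heq, hρdeg⟩ :=
      div_lemma hq hq1 hPigLin hPigMonic hPigDeg φ.natDegree φ le_rfl hφlin
    have hρ0 : ρ = 0 := by
      apply eq_zero_of_natDegree_lt_card_of_eval_eq_zero' ρ T
      · intro u hu
        have huV : u ∈ Submodule.span Fq (Set.range g) := (Set.Finite.mem_toFinset _).1 hu
        have h1 : φ.eval u = 0 := eval_span_zero hq hφlin hφeval u huV
        have h2 : Pig.eval u = 0 := hPigEvalT u hu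
        have h3 : (0 : F) = Polynomial.eval u (β.comp Pig) + Polynomial.eval u ρ := by
          rw [← h1, heq, eval_add]
        have h4 : Polynomial.eval u (β.comp Pig) = 0 := by
          rw [eval_comp, h2, eval_zero_of_lin hq hβlin]
        rw [h4, zero_add] at h3
        exact h3.symm
      · rw [hTdef, card_span hg]
        exact hρdeg
    refine ⟨β, h, hβlin, hh, ?_, rfl⟩
    have h4 : φ = β.comp Pig := by rw [heq, hρ0, add_zero]
    rw [hφdef] at h4
    linear_combination h4
  · rintro ⟨β, γ, hβ, hγ, rfl, rfl⟩ i
    rw [eval_sub, eval_comp, eval_comp, hPigEval i, eval_zero_of_lin hq hβ, hLam i]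
    ring
end

section
/- Let M be a left submodule of L_q(x,q^m)^l with a minimal basis B = {b^(1),...,b^(L)} with respect to a fixed monomial order. For any nonzero f in M written as f = sum_i a_i(x) composed with b^(i), the leading monomial of f equals max over i with a_i nonzero of lm(a_i) composed with lm(b^(i)). -/
open Polynomial

/-- A vector of `q`-linearized polynomials. -/
def IsLinVec {F : Type*} [Field F] (q : ℕ) {l : ℕ} (f : Fin l → Polynomial F) : Prop :=
  ∀ i, IsLin q (f i)

/-- A monomial `x^{q^k} e_pos` of `L_q(x,q^m)^l`. -/
structure Mon (l : ℕ) where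
  k : ℕ
  pos : Fin l

/-- `lt` is a monomial order on `L_q(x,q^m)^l`: a total (strict) order such that
left composition by `x^{q^j}` (which sends `x^{q^k} e_i` to `x^{q^{j+k}} e_i`)
increases monomials (for `j > 0`) and preserves the order. -/
structure IsMonOrder {l : ℕ} (lt : Mon l → Mon l → Prop) : Prop where
  irrefl : ∀ m, ¬ lt m m
  trans : ∀ a b c, lt a b → lt b c → lt a c
  total : ∀ a b, lt a b ∨ a = b ∨ lt b a
  comp_gt : ∀ (m : Mon l) (j : ℕ), 0 < j → lt m ⟨j + m.k, m.pos⟩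
  comp_mono : ∀ (m1 m2 : Mon l) (j : ℕ), lt m1 m2 → lt ⟨j + m1.k, m1.pos⟩ ⟨j + m2.k, m2.pos⟩

/-- The monomial `x^{q^k} e_pos` occurs in `f`. -/
def MonOf {F : Type*} [Field F] (q : ℕ) {l : ℕ} (f : Fin l → Polynomial F)
    (mo : Mon l) : Prop :=
  q ^ mo.k ∈ (f mo.pos).support

/-- `mo` is the leading monomial of `f` with respect to the monomial order `lt`. -/
def IsLM {F : Type*} [Field F] (q : ℕ) {l : ℕ} (lt : Mon l → Mon l → Prop)
    (f : Fin l → Polynomial F) (mo : Mon l) : Prop :=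
  MonOf q f mo ∧ ∀ mo', MonOf q f mo' → mo' = mo ∨ lt mo' mo

/-- `M` is a left submodule of `L_q(x,q^m)^l` over the ring of `q`-linearized
polynomials with composition. -/
def IsLinSubmodule {F : Type*} [Field F] (q : ℕ) {l : ℕ}
    (M : Set (Fin l → Polynomial F)) : Prop :=
  (∀ f ∈ M, IsLinVec q f) ∧ ((fun _ => 0) ∈ M) ∧
  (∀ f ∈ M, ∀ g ∈ M, (fun j => f j + g j) ∈ M) ∧
  (∀ a : Polynomial F, IsLin q a → ∀ f ∈ M, (fun j => a.comp (f j)) ∈ M)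

/-- `B` is a basis of `M`: its members lie in `M`, generate `M` by left combinations
`∑ aᵢ ∘ bᵢ` with `q`-linearized coefficients, and are linearly independent. -/
def IsBasisOf {F : Type*} [Field F] (q : ℕ) {l : ℕ} {ι : Type*} [Fintype ι]
    (M : Set (Fin l → Polynomial F)) (B : ι → Fin l → Polynomial F) : Prop :=
  (∀ i, B i ∈ M) ∧
  (∀ f ∈ M, ∃ a : ι → Polynomial F, (∀ i, IsLin q (a i)) ∧
    f = fun j => ∑ i, (a i).comp (B i j)) ∧
  (∀ a : ι → Polynomial F, (∀ i, IsLin q (a i)) →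
    ((fun j => ∑ i, (a i).comp (B i j)) = fun _ => (0 : Polynomial F)) → ∀ i, a i = 0)

section Aux
variable {F : Type*} [Field F]

lemma aux_coeff_pow (p : ℕ) [ExpChar F p] (hp : 0 < p) (g : F[X]) (n m : ℕ) :
    (g ^ p ^ n).coeff m =
      if p ^ n ∣ m then g.coeff (m / p ^ n) ^ p ^ n else 0 := by
  have map_expand_pow_char : ∀ g : F[X],
      (expand F (p ^ n) g).map (frobenius F p ^ n) = g ^ p ^ n := fun g => by
    rw [← map_iterateFrobenius_expand p g n]
    congr 1
    ext x
    rw [RingHom.coe_pow, iterate_frobenius, iterateFrobenius_def]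
  rw [← map_expand_pow_char, Polynomial.coeff_map,
    Polynomial.coeff_expand (pow_pos hp n), apply_ite (frobenius F p ^ n), map_zero]
  congr 1
  rw [RingHom.coe_pow]
  exact iterate_frobenius ..

lemma aux_coeff_pow_q (p : ℕ) [ExpChar F p] (hp : 0 < p) (s e m : ℕ) (g : F[X]) :
    (g ^ (p ^ s) ^ e).coeff m =
      if (p ^ s) ^ e ∣ m then g.coeff (m / (p ^ s) ^ e) ^ (p ^ s) ^ e else 0 := by
  rw [show (p ^ s) ^ e = p ^ (s * e) from (pow_mul p s e).symm]
  exact aux_coeff_pow p hp g (s * e) m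

lemma aux_coeff_comp (a g : F[X]) (m : ℕ) :
    (a.comp g).coeff m = ∑ n ∈ a.support, a.coeff n * (g ^ n).coeff m := by
  rw [Polynomial.comp_eq_sum_left, Polynomial.sum, Polynomial.finset_sum_coeff]
  simp [Polynomial.coeff_C_mul]

lemma aux_comp_support (p : ℕ) [ExpChar F p] (hp : 0 < p) (q s : ℕ) (hq : q = p ^ s)
    (a g : F[X]) (ha : IsLin q a) (hg : IsLin q g) (m : ℕ)
    (hm : (a.comp g).coeff m ≠ 0) :
    ∃ e t, m = q ^ (e + t) ∧ a.coeff (q ^ e) ≠ 0 ∧ g.coeff (q ^ t) ≠ 0 := by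
  subst hq
  rw [aux_coeff_comp] at hm
  obtain ⟨n, hn, hne⟩ := Finset.exists_ne_zero_of_sum_ne_zero hm
  obtain ⟨e, rfl⟩ := ha n hn
  have han : a.coeff ((p ^ s) ^ e) ≠ 0 := Polynomial.mem_support_iff.mp hn
  have hgm : (g ^ (p ^ s) ^ e).coeff m ≠ 0 := right_ne_zero_of_mul hne
  rw [aux_coeff_pow_q p hp] at hgm
  by_cases hdvd : (p ^ s) ^ e ∣ m
  · rw [if_pos hdvd] at hgm
    have hq0 : 0 < (p ^ s) ^ e := pow_pos (pow_pos hp s) e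
    have hg0 : g.coeff (m / (p ^ s) ^ e) ≠ 0 :=
      fun h => hgm (by rw [h]; exact zero_pow hq0.ne')
    obtain ⟨t, ht⟩ := hg (m / (p ^ s) ^ e) (Polynomial.mem_support_iff.mpr hg0)
    refine ⟨e, t, ?_, han, ht ▸ hg0⟩
    rw [pow_add, ← Nat.div_mul_cancel hdvd, ht, mul_comm]
  · rw [if_neg hdvd] at hgm; exact absurd rfl hgm

lemma aux_comp_coeff_top (p : ℕ) [ExpChar F p] (hp : 0 < p) (q s : ℕ) (hq : q = p ^ s)
    (hq1 : 1 < q) (a g : F[X]) (ha : IsLin q a) (d k : ℕ)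
    (ha0 : a ≠ 0) (hdeg : a.natDegree = q ^ d)
    (hgk : ∀ t, k < t → g.coeff (q ^ t) = 0) :
    (a.comp g).coeff (q ^ (d + k)) =
      a.coeff (q ^ d) * g.coeff (q ^ k) ^ q ^ d := by
  subst hq
  have hq0 : 0 < p ^ s := lt_trans Nat.zero_lt_one hq1
  rw [aux_coeff_comp]
  have hmem : (p ^ s) ^ d ∈ a.support := by
    rw [← hdeg]; exact Polynomial.natDegree_mem_support_of_nonzero ha0
  rw [Finset.sum_eq_single_of_mem _ hmem]
  · rw [aux_coeff_pow_q p hp, if_pos (pow_dvd_pow _ (Nat.le_add_right d k)),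
      Nat.pow_div (Nat.le_add_right d k) hq0, Nat.add_sub_cancel_left]
  · intro n hn hne
    obtain ⟨e, rfl⟩ := ha n hn
    have hle : e ≤ d := by
      have := Polynomial.le_natDegree_of_mem_supp _ hn
      rw [hdeg] at this
      exact (Nat.pow_le_pow_iff_right hq1).mp this
    have helt : e < d := lt_of_le_of_ne hle (fun h => hne (by rw [h]))
    rw [aux_coeff_pow_q p hp,
      if_pos (pow_dvd_pow _ (le_trans hle (Nat.le_add_right d k))),
      Nat.pow_div (le_trans hle (Nat.le_add_right d k)) hq0,
      hgk _ (by omega), zero_pow (pow_pos hq0 e).ne', mul_zero]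

lemma aux_exists_max {ι α : Type*} (lt : α → α → Prop)
    (htrans : ∀ a b c, lt a b → lt b c → lt a c)
    (htot : ∀ a b, lt a b ∨ a = b ∨ lt b a)
    (s : Finset ι) (hs : s.Nonempty) (c : ι → α) :
    ∃ i0 ∈ s, ∀ i ∈ s, c i = c i0 ∨ lt (c i) (c i0) := by
  classical
  induction s using Finset.induction_on with
  | empty => simp at hs
  | insert x t hx ih =>
    by_cases ht : t.Nonempty
    · obtain ⟨i0, hi0, hmax⟩ := ih ht
      rcases htot (c x) (c i0) with h | h | h
      · refine ⟨i0, Finset.mem_insert_of_mem hi0, ?_⟩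
        intro i hi
        rcases Finset.mem_insert.mp hi with rfl | hi
        · exact Or.inr h
        · exact hmax i hi
      · refine ⟨i0, Finset.mem_insert_of_mem hi0, ?_⟩
        intro i hi
        rcases Finset.mem_insert.mp hi with rfl | hi
        · exact Or.inl h
        · exact hmax i hi
      · refine ⟨x, Finset.mem_insert_self x t, ?_⟩
        intro i hi
        rcases Finset.mem_insert.mp hi with rfl | hi
        · exact Or.inl rfl
        · rcases hmax i hi with heq | hlt
          · exact Or.inr (heq ▸ h)
          · exact Or.inr (htrans _ _ _ hlt h)
    · rw [Finset.not_nonempty_iff_eq_empty] at ht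
      subst ht
      refine ⟨x, Finset.mem_insert_self x _, ?_⟩
      intro i hi
      rcases Finset.mem_insert.mp hi with rfl | hi
      · exact Or.inl rfl
      · simp at hi

end Aux

/-- Predictable Leading Monomial property: if `B` is a minimal basis (all leading
positions distinct) of a left submodule `M` of `L_q(x,q^m)^l` and `0 ≠ f ∈ M` is
written as `f = ∑ aᵢ ∘ bᵢ` with `q`-linearized `aᵢ` (where `aᵢ` has `q`-degree `d i`
when nonzero), then the leading monomial of `f` is the maximum, over `i` with
`aᵢ ≠ 0`, of `lm(aᵢ) ∘ lm(bᵢ)`. -/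
theorem stmt14 {Fq F : Type*} [Field Fq] [Fintype Fq] [Field F] [Algebra Fq F]
    {l : ℕ} (lt : Mon l → Mon l → Prop) (hlt : IsMonOrder lt)
    {ι : Type*} [Fintype ι]
    (M : Set (Fin l → Polynomial F)) (hM : IsLinSubmodule (Fintype.card Fq) M)
    (B : ι → Fin l → Polynomial F) (hB : IsBasisOf (Fintype.card Fq) M B)
    (mb : ι → Mon l) (hmb : ∀ i, IsLM (Fintype.card Fq) lt (B i) (mb i))
    (hmin : Function.Injective fun i => (mb i).pos)
    (f : Fin l → Polynomial F) (hf0 : f ≠ fun _ => 0)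
    (a : ι → Polynomial F) (ha : ∀ i, IsLin (Fintype.card Fq) (a i))
    (hrep : f = fun j => ∑ i, (a i).comp (B i j))
    (d : ι → ℕ) (hd : ∀ i, a i ≠ 0 → (a i).natDegree = Fintype.card Fq ^ d i) :
    ∃ i0, a i0 ≠ 0 ∧
      IsLM (Fintype.card Fq) lt f ⟨d i0 + (mb i0).k, (mb i0).pos⟩ ∧
      ∀ i, a i ≠ 0 →
        (⟨d i + (mb i).k, (mb i).pos⟩ : Mon l) = ⟨d i0 + (mb i0).k, (mb i0).pos⟩ ∨
        lt ⟨d i + (mb i).k, (mb i).pos⟩ ⟨d i0 + (mb i0).k, (mb i0).pos⟩ := by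
  classical
  set q := Fintype.card Fq with hqdef
  have hq1 : 1 < q := Fintype.one_lt_card
  haveI := ringChar.charP Fq
  obtain ⟨sn, hp, hqs⟩ := FiniteField.card Fq (ringChar Fq)
  set p := ringChar Fq with hpdef
  haveI : CharP F p := charP_of_injective_algebraMap (algebraMap Fq F).injective p
  haveI : ExpChar F p := ExpChar.prime hp
  have hp0 : 0 < p := hp.pos
  have hpowinj : ∀ {e t : ℕ}, q ^ e = q ^ t → e = t :=
    fun h => Nat.pow_right_injective hq1 h
  have hBlin : ∀ i, IsLinVec q (B i) := fun i => hM.1 _ (hB.1 i)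
  have le_trans' : ∀ x y z : Mon l, (x = y ∨ lt x y) → (y = z ∨ lt y z) →
      (x = z ∨ lt x z) := by
    rintro x y z (rfl | h1) (rfl | h2)
    · exact Or.inl rfl
    · exact Or.inr h2
    · exact Or.inr h1
    · exact Or.inr (hlt.trans _ _ _ h1 h2)
  have le_antisymm' : ∀ x y : Mon l, (x = y ∨ lt x y) → (y = x ∨ lt y x) → x = y := by
    rintro x y (rfl | h1) h2
    · rfl
    · rcases h2 with rfl | h2
      · rfl
      · exact absurd (hlt.trans _ _ _ h1 h2) (hlt.irrefl x)
  have hshift : ∀ (e dd k : ℕ) (pos : Fin l), e ≤ dd →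
      ((⟨e + k, pos⟩ : Mon l) = ⟨dd + k, pos⟩ ∨
        lt ⟨e + k, pos⟩ ⟨dd + k, pos⟩) := by
    intro e dd k pos he
    rcases eq_or_lt_of_le he with rfl | hlt'
    · exact Or.inl rfl
    · have h := hlt.comp_gt ⟨e + k, pos⟩ (dd - e) (by omega)
      have heq : (⟨dd - e + (e + k), pos⟩ : Mon l) = ⟨dd + k, pos⟩ := by
        congr 1; omega
      exact Or.inr (heq ▸ h)
  -- every monomial of `(a i) ∘ (B i)` is ≤ the candidate monomial of `i`
  have fact1 : ∀ i, a i ≠ 0 → ∀ mo : Mon l,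
      ((a i).comp (B i mo.pos)).coeff (q ^ mo.k) ≠ 0 →
      (mo = (⟨d i + (mb i).k, (mb i).pos⟩ : Mon l) ∨
        lt mo ⟨d i + (mb i).k, (mb i).pos⟩) := by
    intro i hai mo hmo
    obtain ⟨e, t, hm, hae, hgt⟩ := aux_comp_support p hp0 q sn hqs (a i)
      (B i mo.pos) (ha i) (hBlin i mo.pos) _ hmo
    obtain ⟨mk, mpos⟩ := mo
    have hket : mk = e + t := hpowinj hm
    subst hket
    have hmo' : MonOf q (B i) ⟨t, mpos⟩ := Polynomial.mem_support_iff.mpr hgt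
    have hle_e : e ≤ d i := by
      have h1 : q ^ e ≤ (a i).natDegree :=
        Polynomial.le_natDegree_of_mem_supp _ (Polynomial.mem_support_iff.mpr hae)
      rw [hd i hai] at h1
      exact (Nat.pow_le_pow_iff_right hq1).mp h1
    have step1 : (⟨e + t, mpos⟩ : Mon l) = ⟨e + (mb i).k, (mb i).pos⟩ ∨
        lt ⟨e + t, mpos⟩ ⟨e + (mb i).k, (mb i).pos⟩ := by
      rcases (hmb i).2 _ hmo' with heq | hltb
      · left; rw [← heq]
      · exact Or.inr (hlt.comp_mono ⟨t, mpos⟩ (mb i) e hltb)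
    exact le_trans' _ _ _ step1 (hshift e (d i) (mb i).k (mb i).pos hle_e)
  have hex : ∃ i, a i ≠ 0 := by
    by_contra h
    push_neg at h
    apply hf0
    funext j
    simp [hrep, h]
  obtain ⟨i0, hi0S, hmax⟩ := aux_exists_max lt hlt.trans hlt.total
    (Finset.univ.filter (fun i => a i ≠ 0))
    (by obtain ⟨i, hi⟩ := hex; exact ⟨i, by simp [hi]⟩)
    (fun i => (⟨d i + (mb i).k, (mb i).pos⟩ : Mon l))
  have hai0 : a i0 ≠ 0 := (Finset.mem_filter.mp hi0S).2
  have hmax' : ∀ i, a i ≠ 0 →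
      ((⟨d i + (mb i).k, (mb i).pos⟩ : Mon l) = ⟨d i0 + (mb i0).k, (mb i0).pos⟩ ∨
        lt ⟨d i + (mb i).k, (mb i).pos⟩ ⟨d i0 + (mb i0).k, (mb i0).pos⟩) :=
    fun i hi => hmax i (by simp [hi])
  have hcoefff : ∀ (mo : Mon l), (f mo.pos).coeff (q ^ mo.k) =
      ∑ i, ((a i).comp (B i mo.pos)).coeff (q ^ mo.k) := by
    intro mo
    simp only [hrep]
    exact (Polynomial.finset_sum_coeff _ _ _)
  have hBk0 : ∀ t, (mb i0).k < t → (B i0 (mb i0).pos).coeff (q ^ t) = 0 := by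
    intro t ht
    by_contra hne
    have hmon : MonOf q (B i0) ⟨t, (mb i0).pos⟩ := Polynomial.mem_support_iff.mpr hne
    rcases (hmb i0).2 _ hmon with heq | hltb
    · have : t = (mb i0).k := congrArg Mon.k heq
      omega
    · have hgt := hlt.comp_gt (mb i0) (t - (mb i0).k) (by omega)
      have heq2 : (⟨t - (mb i0).k + (mb i0).k, (mb i0).pos⟩ : Mon l) =
          ⟨t, (mb i0).pos⟩ := by congr 1; omega
      rw [heq2] at hgt
      exact hlt.irrefl _ (hlt.trans _ _ _ hltb hgt)
  have hcoeffa : (a i0).coeff (q ^ d i0) ≠ 0 := by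
    rw [← hd i0 hai0]
    exact Polynomial.leadingCoeff_ne_zero.mpr hai0
  have hcoeffb : (B i0 (mb i0).pos).coeff (q ^ (mb i0).k) ≠ 0 :=
    Polynomial.mem_support_iff.mp (hmb i0).1
  have htop : ((a i0).comp (B i0 (mb i0).pos)).coeff (q ^ (d i0 + (mb i0).k)) ≠ 0 := by
    rw [aux_comp_coeff_top p hp0 q sn hqs hq1 (a i0) (B i0 (mb i0).pos) (ha i0)
      (d i0) (mb i0).k hai0 (hd i0 hai0) hBk0]
    exact mul_ne_zero hcoeffa (pow_ne_zero _ hcoeffb)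
  have hzero : ∀ i, i ≠ i0 →
      ((a i).comp (B i (mb i0).pos)).coeff (q ^ (d i0 + (mb i0).k)) = 0 := by
    intro i hne
    by_cases hai : a i = 0
    · simp [hai]
    · by_contra hnz
      have h1 := fact1 i hai ⟨d i0 + (mb i0).k, (mb i0).pos⟩ hnz
      have h2 := hmax' i hai
      have heq : (⟨d i + (mb i).k, (mb i).pos⟩ : Mon l) =
          ⟨d i0 + (mb i0).k, (mb i0).pos⟩ := le_antisymm' _ _ h2 h1
      have hpos : (mb i).pos = (mb i0).pos := by
        have := congrArg Mon.pos heq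
        simpa using this
      exact hne (hmin hpos)
  have hmonf : (f (mb i0).pos).coeff (q ^ (d i0 + (mb i0).k)) ≠ 0 := by
    have := hcoefff ⟨d i0 + (mb i0).k, (mb i0).pos⟩
    rw [this, Finset.sum_eq_single_of_mem i0 (Finset.mem_univ _)
      (fun i _ hne => hzero i hne)]
    exact htop
  refine ⟨i0, hai0, ⟨Polynomial.mem_support_iff.mpr hmonf, ?_⟩, hmax'⟩
  intro mo hmo
  have hsum : (∑ i, ((a i).comp (B i mo.pos)).coeff (q ^ mo.k)) ≠ 0 := by
    rw [← hcoefff mo]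
    exact Polynomial.mem_support_iff.mp hmo
  obtain ⟨i, _, hne⟩ := Finset.exists_ne_zero_of_sum_ne_zero hsum
  have hai : a i ≠ 0 := by
    intro h
    rw [h] at hne
    simp at hne
  exact le_trans' _ _ _ (fact1 i hai mo hne) (hmax' i hai)
end

section
/- A basis B of a left submodule M of L_q(x,q^m)^l is minimal (no element reducible modulo the others) if and only if the leading positions of the elements of B are pairwise distinct. -/
open Polynomial

/-- `f` can be reduced modulo the family `G` (in one step): there are shifts
`x^{q^{a i}}` and scalars `b i` such that each used `G i` has leading monomial
matching `lm f = x^{q^{a i}} ∘ lm (G i)` and the leading term of `f` is the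
corresponding left combination of the leading terms of the `G i`. -/
def Reducible {F : Type*} [Field F] (q : ℕ) {l : ℕ} (lt : Mon l → Mon l → Prop)
    (f : Fin l → Polynomial F) {ι : Type*} [Fintype ι]
    (G : ι → Fin l → Polynomial F) : Prop :=
  ∃ (mo : Mon l) (mg : ι → Mon l) (a : ι → ℕ) (b : ι → F),
    IsLM q lt f mo ∧
    (∀ i, b i ≠ 0 →
      IsLM q lt (G i) (mg i) ∧ (mg i).pos = mo.pos ∧ a i + (mg i).k = mo.k) ∧
    (f mo.pos).coeff (q ^ mo.k) =
      ∑ i, b i * ((G i (mg i).pos).coeff (q ^ (mg i).k)) ^ q ^ (a i)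

/-- A basis `B` of a left submodule `M` of `L_q(x,q^m)^l` is minimal (no element is
reducible modulo the others) iff the leading positions of its elements are pairwise
distinct. -/
theorem stmt15 {Fq F : Type*} [Field Fq] [Fintype Fq] [Field F] [Algebra Fq F]
    {l L : ℕ} (lt : Mon l → Mon l → Prop) (hlt : IsMonOrder lt)
    (M : Set (Fin l → Polynomial F)) (hM : IsLinSubmodule (Fintype.card Fq) M)
    (B : Fin L → Fin l → Polynomial F) (hB : IsBasisOf (Fintype.card Fq) M B)
    (hB0 : ∀ i, B i ≠ fun _ => 0)
    (mb : Fin L → Mon l) (hmb : ∀ i, IsLM (Fintype.card Fq) lt (B i) (mb i)) :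
    (∀ i, ¬ Reducible (Fintype.card Fq) lt (B i)
        (fun jj : {j : Fin L // j ≠ i} => B jj.val)) ↔
      Function.Injective fun i => (mb i).pos := by
  classical
  set q := Fintype.card Fq with hq
  have lmu : ∀ (f : Fin l → Polynomial F) (mo mo' : Mon l),
      IsLM q lt f mo → IsLM q lt f mo' → mo' = mo := by
    intro f mo mo' h h'
    rcases h.2 mo' h'.1 with h1 | h1
    · exact h1
    rcases h'.2 mo h.1 with h2 | h2
    · exact h2.symm
    exact absurd (hlt.trans _ _ _ h1 h2) (hlt.irrefl _)
  constructor
  · intro hred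
    have key : ∀ i j : Fin L, j ≠ i → (mb i).pos = (mb j).pos →
        (mb j).k ≤ (mb i).k → False := by
      intro i j hne hpos hkle
      apply hred i
      set ci := (B i (mb i).pos).coeff (q ^ (mb i).k) with hci
      set cj := (B j (mb j).pos).coeff (q ^ (mb j).k) with hcj
      have hcj0 : cj ≠ 0 := Polynomial.mem_support_iff.mp (hmb j).1
      set e : ℕ := q ^ ((mb i).k - (mb j).k) with he
      refine ⟨mb i, fun jj => mb jj.val, fun jj => (mb i).k - (mb jj.val).k,
        fun jj => if jj.val = j then ci / cj ^ e else 0, hmb i, ?_, ?_⟩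
      · intro jj hb
        have hjj : jj.val = j := by
          by_contra h
          simp [h] at hb
        refine ⟨hmb jj.val, ?_, ?_⟩
        · simp only [hjj]
          exact hpos.symm
        · simp only [hjj]
          exact Nat.sub_add_cancel hkle
      · have hne' : (⟨j, hne⟩ : {x : Fin L // x ≠ i}) ∈ (Finset.univ : Finset {x : Fin L // x ≠ i}) :=
          Finset.mem_univ _
        rw [Finset.sum_eq_single (⟨j, hne⟩ : {x : Fin L // x ≠ i})]
        · have hce : cj ^ e ≠ 0 := pow_ne_zero _ hcj0
          simp only [if_true, ite_true, if_pos]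
          rw [← he, div_mul_cancel₀ _ hce]
        · intro jj _ hjj
          have : jj.val ≠ j := fun h => hjj (Subtype.ext h)
          simp [this]
        · intro h
          exact absurd hne' h
    intro i j h
    by_contra hne2
    rcases le_total (mb j).k (mb i).k with hk | hk
    · exact key i j (fun h' => hne2 h'.symm) h hk
    · exact key j i hne2 (by simpa using h.symm) hk
  · intro hinj i hred
    obtain ⟨mo, mg, a, b, hlm, hcond, hsum⟩ := hred
    have hmo : mo = mb i := lmu _ _ _ (hmb i) hlm
    have hb0 : ∀ jj, b jj = 0 := by
      intro jj
      by_contra hb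
      obtain ⟨hlmg, hpos, hk⟩ := hcond jj hb
      have hmg : mg jj = mb jj.val := lmu _ _ _ (hmb jj.val) hlmg
      have : (fun i => (mb i).pos) jj.val = (fun i => (mb i).pos) i := by
        simp only
        rw [← hmg, hpos, hmo]
      exact jj.prop (hinj this)
    have hzero : (B i mo.pos).coeff (q ^ mo.k) = 0 := by
      rw [hsum]
      simp [hb0]
    exact (Polynomial.mem_support_iff.mp hlm.1) hzero
end

section
/- Any two minimal bases of the same left submodule of L_q(x,q^m)^l have the same cardinality, and there is a bijection between them matching leading positions and weighted q-degrees of corresponding elements. -/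
open Polynomial

/-- The `(w 0, ..., w (l-1))`-weighted term-over-position monomial order. -/
def wlt {l : ℕ} (w : Fin l → ℕ) (m1 m2 : Mon l) : Prop :=
  m1.k + w m1.pos < m2.k + w m2.pos ∨
  (m1.k + w m1.pos = m2.k + w m2.pos ∧ m1.pos < m2.pos)

/-- `f` has `(w 0, ..., w (l-1))`-weighted `q`-degree `dd`. -/
def WDegIs {F : Type*} [Field F] (q : ℕ) {l : ℕ} (w : Fin l → ℕ)
    (f : Fin l → Polynomial F) (dd : ℕ) : Prop :=
  (∃ mo : Mon l, MonOf q f mo ∧ mo.k + w mo.pos = dd) ∧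
  (∀ mo : Mon l, MonOf q f mo → mo.k + w mo.pos ≤ dd)


section Helpers

variable {F : Type*} [Field F] {l : ℕ}

/-- Key for the lexicographic comparison underlying `wlt`. -/
def mkey (w : Fin l → ℕ) (m : Mon l) : ℕ ×ₗ Fin l := toLex (m.k + w m.pos, m.pos)

lemma mkey_inj (w : Fin l → ℕ) : Function.Injective (mkey w) := by
  intro m m' h
  rw [mkey, mkey, toLex_inj, Prod.mk.injEq] at h
  obtain ⟨h1, h2⟩ := h
  rw [h2] at h1
  have h3 : m.k = m'.k := by omega
  cases m; cases m'
  simp only [Mon.mk.injEq]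
  exact ⟨h3, h2⟩

lemma wlt_iff_key (w : Fin l → ℕ) (m m' : Mon l) :
    wlt w m m' ↔ mkey w m < mkey w m' := by
  rw [mkey, mkey, Prod.Lex.lt_iff]
  rfl

lemma wltle_iff (w : Fin l → ℕ) (m m' : Mon l) :
    (m = m' ∨ wlt w m m') ↔ mkey w m ≤ mkey w m' := by
  rw [le_iff_lt_or_eq, wlt_iff_key]
  constructor
  · rintro (rfl | h)
    · exact Or.inr rfl
    · exact Or.inl h
  · rintro (h | h)
    · exact Or.inr h
    · exact Or.inl (mkey_inj w h)

lemma lin_natDegree {q : ℕ} {g : Polynomial F} (hg : IsLin q g) (h0 : g ≠ 0) :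
    ∃ K, g.natDegree = q ^ K ∧ q ^ K ∈ g.support := by
  have hmem := Polynomial.natDegree_mem_support_of_nonzero h0
  obtain ⟨K, hK⟩ := hg _ hmem
  exact ⟨K, hK, hK ▸ hmem⟩

/-- The polynomial at the leading position of `g` has `q`-degree `mo.k`. -/
lemma lm_natDegree {q : ℕ} (hq : 1 < q) {w : Fin l → ℕ} {g : Fin l → Polynomial F}
    {mo : Mon l} (hlin : IsLinVec q g) (hlm : IsLM q (wlt w) g mo) :
    (g mo.pos).natDegree = q ^ mo.k := by
  have hmem : q ^ mo.k ∈ (g mo.pos).support := hlm.1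
  have h0 : g mo.pos ≠ 0 := by
    intro h
    rw [h] at hmem
    simp at hmem
  obtain ⟨K, hK, hKs⟩ := lin_natDegree (hlin mo.pos) h0
  have hmon : MonOf q g ⟨K, mo.pos⟩ := hKs
  have hKle : K ≤ mo.k := by
    rcases hlm.2 _ hmon with h | h
    · have : K = mo.k := congrArg Mon.k h
      omega
    · rcases h with h | ⟨_, h⟩
      · simp only at h; omega
      · exact absurd h (lt_irrefl _)
  have h1 : q ^ mo.k ≤ (g mo.pos).natDegree := Polynomial.le_natDegree_of_ne_zero
    (Polynomial.mem_support_iff.mp hmem)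
  have h2 : (g mo.pos).natDegree ≤ q ^ mo.k := by
    rw [hK]
    exact Nat.pow_le_pow_right (by omega) hKle
  omega

/-- Any monomial of `a ∘ (g pos)` is `wlt`-bounded by `⟨T + mo.k, mo.pos⟩`. -/
lemma comp_mon_le {q : ℕ} (hq : 1 < q) {w : Fin l → ℕ} {g : Fin l → Polynomial F}
    {mo : Mon l} (hlin : IsLinVec q g) (hlm : IsLM q (wlt w) g mo)
    {a : Polynomial F} {T : ℕ} (hT : a.natDegree = q ^ T)
    {e : ℕ} {pos : Fin l} (hc : (a.comp (g pos)).coeff (q ^ e) ≠ 0) :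
    mkey w ⟨e, pos⟩ ≤ mkey w ⟨T + mo.k, mo.pos⟩ := by
  have hle : q ^ e ≤ (a.comp (g pos)).natDegree := Polynomial.le_natDegree_of_ne_zero hc
  rw [Polynomial.natDegree_comp, hT] at hle
  have hqe : 0 < q ^ e := Nat.pow_pos (by omega)
  by_cases h0 : g pos = 0
  · rw [h0] at hle
    simp only [Polynomial.natDegree_zero, Nat.mul_zero] at hle
    omega
  obtain ⟨K, hK, hKs⟩ := lin_natDegree (hlin pos) h0
  rw [hK, ← pow_add] at hle
  have he : e ≤ T + K := (Nat.pow_le_pow_iff_right hq).mp hle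
  have hmon : MonOf q g ⟨K, pos⟩ := hKs
  have hle2 : mkey w ⟨K, pos⟩ ≤ mkey w mo := (wltle_iff w _ _).mp (by
    rcases hlm.2 _ hmon with h | h
    · exact Or.inl h
    · exact Or.inr h)
  rw [mkey, mkey, Prod.Lex.le_iff] at hle2 ⊢
  simp only [ofLex_toLex] at hle2 ⊢
  rcases hle2 with h | ⟨h1, h2⟩
  · left; omega
  · rcases Nat.lt_or_ge (e + w pos) (T + mo.k + w mo.pos) with h | h
    · left; exact h
    · right; exact ⟨by omega, h2⟩

lemma lm_unique {q : ℕ} {w : Fin l → ℕ} {g : Fin l → Polynomial F} {mo mo' : Mon l}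
    (h : IsLM q (wlt w) g mo) (h' : IsLM q (wlt w) g mo') : mo = mo' := by
  rcases h'.2 mo h.1 with h1 | h1
  · exact h1
  rcases h.2 mo' h'.1 with h2 | h2
  · exact h2.symm
  rw [wlt_iff_key] at h1 h2
  exact absurd h1 (not_lt_of_gt h2)

lemma wdeg_eq {q : ℕ} {w : Fin l → ℕ} {g : Fin l → Polynomial F} {mo : Mon l}
    (h : IsLM q (wlt w) g mo) {d : ℕ} (hd : WDegIs q w g d) :
    d = mo.k + w mo.pos := by
  obtain ⟨⟨m0, hm0, hm0d⟩, hub⟩ := hd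
  have h1 : mo.k + w mo.pos ≤ d := hub mo h.1
  have h2 : d ≤ mo.k + w mo.pos := by
    rcases h.2 m0 hm0 with rfl | hlt
    · omega
    · rcases hlt with hlt | ⟨heq, _⟩ <;> omega
  omega

/-- Core lemma: the leading monomial of a combination `∑ aⱼ ∘ B2 j` sits above the
leading monomial of one of the `B2 j`, at the same position. -/
lemma core {q : ℕ} (hq : 1 < q) {w : Fin l → ℕ} {κ : Type*} [Fintype κ]
    {B2 : κ → Fin l → Polynomial F} (hlinB : ∀ j, IsLinVec q (B2 j))
    {m2 : κ → Mon l} (hm2 : ∀ j, IsLM q (wlt w) (B2 j) (m2 j))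
    (hmin2 : Function.Injective fun j => (m2 j).pos)
    {a : κ → Polynomial F} (ha : ∀ j, IsLin q (a j))
    {mo : Mon l} (hmo : IsLM q (wlt w) (fun p => ∑ j, (a j).comp (B2 j p)) mo) :
    ∃ j, mo.pos = (m2 j).pos ∧ (m2 j).k + w (m2 j).pos ≤ mo.k + w mo.pos := by
  classical
  have hTex : ∀ j, a j ≠ 0 → ∃ T, (a j).natDegree = q ^ T := fun j hj => by
    obtain ⟨T, hT, _⟩ := lin_natDegree (ha j) hj
    exact ⟨T, hT⟩
  set T : κ → ℕ := fun j => if h : a j ≠ 0 then (hTex j h).choose else 0 with hTdef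
  have hT : ∀ j, a j ≠ 0 → (a j).natDegree = q ^ T j := fun j hj => by
    simp only [hTdef, dif_pos hj]
    exact (hTex j hj).choose_spec
  set top : κ → Mon l := fun j => ⟨T j + (m2 j).k, (m2 j).pos⟩ with htopdef
  set S : Finset κ := Finset.univ.filter (fun j => a j ≠ 0) with hSdef
  -- any monomial of the sum is bounded by some top j with j ∈ S
  have hbound : ∀ (e : ℕ) (pos : Fin l),
      (∑ j, (a j).comp (B2 j pos)).coeff (q ^ e) ≠ 0 →
      ∃ j ∈ S, mkey w ⟨e, pos⟩ ≤ mkey w (top j) := by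
    intro e pos hc
    rw [Polynomial.finset_sum_coeff] at hc
    obtain ⟨j, _, hj⟩ := Finset.exists_ne_zero_of_sum_ne_zero hc
    have haj : a j ≠ 0 := by
      intro h
      rw [h, Polynomial.zero_comp] at hj
      simp at hj
    exact ⟨j, by simp [hSdef, haj],
      comp_mon_le hq (hlinB j) (hm2 j) (hT j haj) hj⟩
  -- S is nonempty
  have hmoc : (∑ j, (a j).comp (B2 j mo.pos)).coeff (q ^ mo.k) ≠ 0 :=
    Polynomial.mem_support_iff.mp hmo.1
  obtain ⟨j0, hj0S, _⟩ := hbound mo.k mo.pos hmoc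
  -- pick the maximum top over S
  obtain ⟨jm, hjmS, hjmax⟩ := Finset.exists_max_image S (fun j => mkey w (top j)) ⟨j0, hj0S⟩
  have hajm : a jm ≠ 0 := by
    have := hjmS; rw [hSdef] at this; simpa using this
  -- the top of jm is a monomial of the sum
  have hgm0 : (B2 jm (m2 jm).pos) ≠ 0 := by
    intro h
    have := (hm2 jm).1
    rw [MonOf, h] at this
    simp at this
  have hdegg : (B2 jm (m2 jm).pos).natDegree = q ^ (m2 jm).k :=
    lm_natDegree hq (hlinB jm) (hm2 jm)
  have hdeggne : (B2 jm (m2 jm).pos).natDegree ≠ 0 := by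
    rw [hdegg]
    have : 0 < q ^ (m2 jm).k := Nat.pow_pos (by omega)
    omega
  have hmontop : MonOf q (fun p => ∑ j, (a j).comp (B2 j p)) (top jm) := by
    rw [MonOf, Polynomial.mem_support_iff]
    show (∑ j, (a j).comp (B2 j (m2 jm).pos)).coeff (q ^ (T jm + (m2 jm).k)) ≠ 0
    rw [Polynomial.finset_sum_coeff]
    rw [Finset.sum_eq_single jm]
    · -- leading coefficient of the jm term is nonzero
      have hnd : ((a jm).comp (B2 jm (m2 jm).pos)).natDegree = q ^ (T jm + (m2 jm).k) := by
        rw [Polynomial.natDegree_comp, hT jm hajm, hdegg, pow_add]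
      rw [← hnd, ← Polynomial.leadingCoeff, Polynomial.leadingCoeff_comp hdeggne]
      exact mul_ne_zero (Polynomial.leadingCoeff_ne_zero.mpr hajm)
        (pow_ne_zero _ (Polynomial.leadingCoeff_ne_zero.mpr hgm0))
    · intro j _ hjne
      by_contra hc
      have haj : a j ≠ 0 := by
        intro h
        rw [h, Polynomial.zero_comp] at hc
        simp at hc
      have h1 : mkey w ⟨T jm + (m2 jm).k, (m2 jm).pos⟩ ≤ mkey w (top j) :=
        comp_mon_le hq (hlinB j) (hm2 j) (hT j haj) hc
      have h2 : mkey w (top j) ≤ mkey w (top jm) :=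
        hjmax j (by simp [hSdef, haj])
      have h3 : mkey w (top j) = mkey w (top jm) := le_antisymm h2 (h1.trans_eq rfl)
      have h4 : top j = top jm := mkey_inj w h3
      have h5 : (top j).pos = (top jm).pos := congrArg Mon.pos h4
      simp only [htopdef] at h5
      exact hjne (hmin2 h5)
    · intro h
      exact absurd (Finset.mem_univ jm) h
  -- mo is bounded by top jm, and top jm is bounded by mo (mo is the LM)
  obtain ⟨j1, hj1S, hj1⟩ := hbound mo.k mo.pos hmoc
  have hup : mkey w mo ≤ mkey w (top jm) := by
    have : mkey w ⟨mo.k, mo.pos⟩ = mkey w mo := rfl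
    exact this ▸ hj1.trans (hjmax j1 hj1S)
  have hdown : mkey w (top jm) ≤ mkey w mo := (wltle_iff w _ _).mp (hmo.2 _ hmontop)
  have heq : top jm = mo := mkey_inj w (le_antisymm hdown hup)
  refine ⟨jm, ?_, ?_⟩
  · rw [← heq]
  · rw [← heq]
    simp only [htopdef]
    omega

end Helpers

/-- Any two minimal bases (with respect to a weighted term-over-position order) of the
same left submodule of `L_q(x,q^m)^l` have the same cardinality, via a bijection
matching leading positions and weighted `q`-degrees of corresponding elements. -/
theorem stmt16 {Fq F : Type*} [Field Fq] [Fintype Fq] [Field F] [Algebra Fq F]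
    {l : ℕ} (w : Fin l → ℕ) {ι κ : Type*} [Fintype ι] [Fintype κ]
    (M : Set (Fin l → Polynomial F)) (hM : IsLinSubmodule (Fintype.card Fq) M)
    (B1 : ι → Fin l → Polynomial F) (hB1 : IsBasisOf (Fintype.card Fq) M B1)
    (B2 : κ → Fin l → Polynomial F) (hB2 : IsBasisOf (Fintype.card Fq) M B2)
    (m1 : ι → Mon l) (hm1 : ∀ i, IsLM (Fintype.card Fq) (wlt w) (B1 i) (m1 i))
    (m2 : κ → Mon l) (hm2 : ∀ i, IsLM (Fintype.card Fq) (wlt w) (B2 i) (m2 i))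
    (hmin1 : Function.Injective fun i => (m1 i).pos)
    (hmin2 : Function.Injective fun i => (m2 i).pos) :
    ∃ e : ι ≃ κ, ∀ i, (m1 i).pos = (m2 (e i)).pos ∧
      ∀ d1 d2, WDegIs (Fintype.card Fq) w (B1 i) d1 →
        WDegIs (Fintype.card Fq) w (B2 (e i)) d2 → d1 = d2 := by
  classical
  set q := Fintype.card Fq with hqdef
  have hq : 1 < q := Fintype.one_lt_card
  have hlinB2 : ∀ j, IsLinVec q (B2 j) := fun j => hM.1 _ (hB2.1 j)
  have hlinB1 : ∀ i, IsLinVec q (B1 i) := fun i => hM.1 _ (hB1.1 i)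
  have hφ : ∀ i, ∃ j, (m1 i).pos = (m2 j).pos ∧
      (m2 j).k + w (m2 j).pos ≤ (m1 i).k + w (m1 i).pos := by
    intro i
    obtain ⟨a, ha, hfa⟩ := hB2.2.1 (B1 i) (hB1.1 i)
    have hlm : IsLM q (wlt w) (fun p => ∑ j, (a j).comp (B2 j p)) (m1 i) := by
      rw [← hfa]; exact hm1 i
    exact core hq hlinB2 hm2 hmin2 ha hlm
  have hψ : ∀ j, ∃ i, (m2 j).pos = (m1 i).pos ∧
      (m1 i).k + w (m1 i).pos ≤ (m2 j).k + w (m2 j).pos := by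
    intro j
    obtain ⟨a, ha, hfa⟩ := hB1.2.1 (B2 j) (hB2.1 j)
    have hlm : IsLM q (wlt w) (fun p => ∑ i, (a i).comp (B1 i p)) (m2 j) := by
      rw [← hfa]; exact hm2 j
    exact core hq hlinB1 hm1 hmin1 ha hlm
  choose φ hφ1 hφ2 using hφ
  choose ψ hψ1 hψ2 using hψ
  have hψφ : ∀ i, ψ (φ i) = i := by
    intro i
    apply hmin1
    show (m1 (ψ (φ i))).pos = (m1 i).pos
    rw [← hψ1 (φ i), ← hφ1 i]
  have hφψ : ∀ j, φ (ψ j) = j := by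
    intro j
    apply hmin2
    show (m2 (φ (ψ j))).pos = (m2 j).pos
    rw [← hφ1 (ψ j), ← hψ1 j]
  refine ⟨⟨φ, ψ, hψφ, hφψ⟩, fun i => ⟨hφ1 i, fun d1 d2 hd1 hd2 => ?_⟩⟩
  have e1 : d1 = (m1 i).k + w (m1 i).pos := wdeg_eq (hm1 i) hd1
  have e2 : d2 = (m2 (φ i)).k + w (m2 (φ i)).pos := wdeg_eq (hm2 (φ i)) hd2
  have h1 := hφ2 i
  have h2 := hψ2 (φ i)
  rw [hψφ i] at h2
  omega
end

section
/- Let g_1,...,g_n be F_q-linearly independent in F_{q^m}, r in F_{q^m}^n, and let {b^(1), b^(2)} be a minimal basis (with respect to the (0,k-1)-weighted term-over-position order) of the interpolation module M(r), with lpos(b^(1)) = 1 and lpos(b^(2)) = 2. Then the (0,k-1)-weighted q-degrees l_1 and l_2 of b^(1) and b^(2) satisfy l_1 + l_2 = n + k - 1. -/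
open Polynomial

/-- The interpolation module `M(r)`: all pairs `[f, g]` of `q`-linearized polynomials
with `f(g i) + g(r i) = 0` for all `i`. -/
def InterpMod {F : Type*} [Field F] (q : ℕ) {n : ℕ} (g r : Fin n → F) :
    Set (Fin 2 → Polynomial F) :=
  {p | IsLinVec q p ∧ ∀ i, (p 0).eval (g i) + (p 1).eval (r i) = 0}

section Aux

variable {F : Type*} [Field F]

noncomputable def Pc (q : ℕ) (c : ℕ → F) (L : ℕ) : Polynomial F :=
  ∑ t ∈ Finset.range L, Polynomial.monomial (q ^ t) (c t)

variable {q : ℕ}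

lemma coeff_Pc (hq : 1 < q) (c : ℕ → F) (L j : ℕ) :
    (Pc q c L).coeff (q ^ j) = if j < L then c j else 0 := by
  unfold Pc
  rw [Polynomial.finset_sum_coeff]
  by_cases h : j < L
  · rw [Finset.sum_eq_single j]
    · simp [h]
    · intro b _ hbj
      rw [Polynomial.coeff_monomial, if_neg (fun he => hbj (Nat.pow_right_injective hq he))]
    · intro h'; exact absurd (Finset.mem_range.2 h) h'
  · rw [if_neg h]
    apply Finset.sum_eq_zero
    intro t ht
    rw [Polynomial.coeff_monomial, if_neg]
    intro he
    exact h (by rw [Nat.pow_right_injective hq he] at ht; exact Finset.mem_range.1 ht)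

lemma coeff_Pc_npow (c : ℕ → F) (L i : ℕ) (h : ∀ t, i ≠ q ^ t) :
    (Pc q c L).coeff i = 0 := by
  unfold Pc
  rw [Polynomial.finset_sum_coeff]
  apply Finset.sum_eq_zero
  intro t _
  rw [Polynomial.coeff_monomial, if_neg (fun he => h t he.symm)]

lemma isLin_Pc (c : ℕ → F) (L : ℕ) : IsLin q (Pc q c L) := by
  intro i hi
  by_contra hcon
  push_neg at hcon
  rw [Polynomial.mem_support_iff] at hi
  exact hi (coeff_Pc_npow c L i (fun t he => hcon t he))

lemma eval_Pc (c : ℕ → F) (L : ℕ) (x : F) :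
    (Pc q c L).eval x = ∑ t ∈ Finset.range L, c t * x ^ q ^ t := by
  unfold Pc
  rw [Polynomial.eval_finset_sum]
  simp [Polynomial.eval_monomial]

lemma Pc_add (c d : ℕ → F) (L : ℕ) :
    Pc q (fun t => c t + d t) L = Pc q c L + Pc q d L := by
  unfold Pc
  rw [← Finset.sum_add_distrib]
  exact Finset.sum_congr rfl (fun t _ => by rw [map_add])

lemma natDegree_Pc_le (hq : 1 < q) (c : ℕ → F) (L : ℕ) (hL : 0 < L) :
    (Pc q c L).natDegree ≤ q ^ (L - 1) := by
  unfold Pc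
  apply Polynomial.natDegree_sum_le_of_forall_le
  intro t ht
  refine le_trans (Polynomial.natDegree_monomial_le _) ?_
  exact Nat.pow_le_pow_right (le_of_lt hq) (by simp only [Finset.mem_range] at ht; omega)


lemma repr_lin (hq : 1 < q) (f : Polynomial F) (hf : IsLin q f) (L : ℕ)
    (hL : ∀ j : ℕ, q ^ j ∈ f.support → j < L) :
    f = Pc q (fun t => f.coeff (q ^ t)) L := by
  ext i
  by_cases hi : ∃ t : ℕ, i = q ^ t
  · obtain ⟨t, rfl⟩ := hi
    rw [coeff_Pc hq]
    by_cases ht : t < L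
    · rw [if_pos ht]
    · rw [if_neg ht]
      by_contra hc
      exact ht (hL t (Polynomial.mem_support_iff.2 hc))
  · push_neg at hi
    rw [coeff_Pc_npow _ _ _ hi]
    by_contra hc
    obtain ⟨j, hj⟩ := hf i (Polynomial.mem_support_iff.2 hc)
    exact hi j hj

section CharStuff

lemma Pc_pow_qpow (p e : ℕ) [Fact p.Prime] [CharP F p] (hqe : q = p ^ e) (d : ℕ → F) (L s : ℕ) :
    (Pc q d L) ^ (q ^ s) = ∑ j ∈ Finset.range L, Polynomial.monomial (q ^ (j + s)) (d j ^ q ^ s) := by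
  have h1 : q ^ s = p ^ (e * s) := by rw [hqe, ← pow_mul]
  unfold Pc
  rw [h1, sum_pow_char_pow]
  refine Finset.sum_congr rfl (fun j _ => ?_)
  rw [Polynomial.monomial_pow, ← h1, ← pow_add]

lemma comp_Pc (p e : ℕ) [Fact p.Prime] [CharP F p] (hqe : q = p ^ e) (c d : ℕ → F) (L L' : ℕ) :
    (Pc q c L).comp (Pc q d L') =
      ∑ t ∈ Finset.range L, ∑ j ∈ Finset.range L',
        Polynomial.monomial (q ^ (t + j)) (c t * d j ^ q ^ t) := by
  conv_lhs => rw [Pc]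
  rw [Polynomial.sum_comp]
  refine Finset.sum_congr rfl (fun t _ => ?_)
  rw [Polynomial.monomial_comp, Pc_pow_qpow p e hqe, Finset.mul_sum]
  refine Finset.sum_congr rfl (fun j _ => ?_)
  rw [Polynomial.C_mul_monomial, Nat.add_comm j t]

lemma coeff_comp_Pc (p e : ℕ) [Fact p.Prime] [CharP F p] (hqe : q = p ^ e) (hq : 1 < q) (c d : ℕ → F) (L L' E : ℕ) :
    ((Pc q c L).comp (Pc q d L')).coeff (q ^ E) =
      ∑ t ∈ Finset.range L, ∑ j ∈ Finset.range L',
        (if t + j = E then c t * d j ^ q ^ t else 0) := by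
  rw [comp_Pc p e hqe, Polynomial.finset_sum_coeff]
  refine Finset.sum_congr rfl (fun t _ => ?_)
  rw [Polynomial.finset_sum_coeff]
  refine Finset.sum_congr rfl (fun j _ => ?_)
  rw [Polynomial.coeff_monomial]
  by_cases h : t + j = E
  · rw [if_pos (by rw [h]), if_pos h]
  · rw [if_neg (fun he => h (Nat.pow_right_injective hq he)), if_neg h]

lemma coeff_comp_Pc_npow (p e : ℕ) [Fact p.Prime] [CharP F p] (hqe : q = p ^ e) (c d : ℕ → F) (L L' i : ℕ) (h : ∀ t : ℕ, i ≠ q ^ t) :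
    ((Pc q c L).comp (Pc q d L')).coeff i = 0 := by
  rw [comp_Pc p e hqe, Polynomial.finset_sum_coeff]
  refine Finset.sum_eq_zero (fun t _ => ?_)
  rw [Polynomial.finset_sum_coeff]
  refine Finset.sum_eq_zero (fun j _ => ?_)
  rw [Polynomial.coeff_monomial, if_neg (fun he => h _ he.symm)]

end CharStuff

end Aux

section LMstuff
variable {q : ℕ} {F : Type*} [Field F]

lemma LM_supp_le (w : Fin 2 → ℕ) (Bv : Fin 2 → Polynomial F) (mo : Mon 2)
    (hLM : IsLM q (wlt w) Bv mo) :
    ∀ (pos : Fin 2) (j : ℕ), q ^ j ∈ (Bv pos).support → j + w pos ≤ mo.k + w mo.pos := by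
  obtain ⟨mk, mpos⟩ := mo
  intro pos j hj
  dsimp only
  rcases hLM.2 ⟨j, pos⟩ hj with h | h
  · cases h; omega
  · unfold wlt at h
    dsimp only at h
    rcases h with h | ⟨h, _⟩ <;> omega

lemma LM_supp_le_same (w : Fin 2 → ℕ) (Bv : Fin 2 → Polynomial F) (mo : Mon 2)
    (hLM : IsLM q (wlt w) Bv mo) :
    ∀ j : ℕ, q ^ j ∈ (Bv mo.pos).support → j ≤ mo.k := by
  obtain ⟨mk, mpos⟩ := mo
  intro j hj
  dsimp only
  rcases hLM.2 ⟨j, mpos⟩ hj with h | h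
  · cases h; omega
  · unfold wlt at h
    dsimp only at h
    rcases h with h | ⟨_, h⟩
    · omega
    · exact absurd h (lt_irrefl _)

lemma supp_lt_bound (hq : 1 < q) (b : Polynomial F) :
    ∀ j : ℕ, q ^ j ∈ b.support → j < b.natDegree + 1 := by
  intro j hj
  have h1 : q ^ j ≤ b.natDegree := Polynomial.le_natDegree_of_mem_supp _ hj
  have h2 : j < q ^ j := Nat.lt_pow_self hq
  omega

lemma comp_coeff_nonzero_exists (hq : 1 < q) (p e : ℕ) [Fact p.Prime] [CharP F p]
    (hqe : q = p ^ e) (c : ℕ → F) (S : ℕ) (b : Polynomial F) (hb : IsLin q b) (E : ℕ)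
    (h : ((Pc q c S).comp b).coeff (q ^ E) ≠ 0) :
    ∃ t j : ℕ, t < S ∧ t + j = E ∧ c t ≠ 0 ∧ q ^ j ∈ b.support := by
  rw [repr_lin hq b hb (b.natDegree + 1) (supp_lt_bound hq b)] at h
  rw [coeff_comp_Pc p e hqe hq] at h
  obtain ⟨t, ht, h⟩ := Finset.exists_ne_zero_of_sum_ne_zero h
  obtain ⟨j, hj, h⟩ := Finset.exists_ne_zero_of_sum_ne_zero h
  by_cases he : t + j = E
  · rw [if_pos he] at h
    refine ⟨t, j, Finset.mem_range.1 ht, he, fun h0 => h (by rw [h0, zero_mul]), ?_⟩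
    rw [Polynomial.mem_support_iff]
    intro h0
    exact h (by rw [h0, zero_pow (by positivity), mul_zero])
  · rw [if_neg he] at h; exact absurd rfl h

lemma comp_coeff_top (hq : 1 < q) (p e : ℕ) [Fact p.Prime] [CharP F p]
    (hqe : q = p ^ e) (c : ℕ → F) (s : ℕ) (b : Polynomial F) (hb : IsLin q b) (κ : ℕ)
    (hκ : ∀ j : ℕ, q ^ j ∈ b.support → j ≤ κ) :
    ((Pc q c (s + 1)).comp b).coeff (q ^ (s + κ)) = c s * (b.coeff (q ^ κ)) ^ q ^ s := by
  have hrep := repr_lin hq b hb (κ + 1) (fun j hj => Nat.lt_succ_of_le (hκ j hj))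
  conv_lhs => rw [hrep]
  rw [coeff_comp_Pc p e hqe hq]
  rw [Finset.sum_eq_single s]
  · rw [Finset.sum_eq_single κ]
    · rw [if_pos rfl]
    · intro j _ hjκ
      rw [if_neg (by omega)]
    · intro hs; exact absurd (Finset.mem_range.2 (by omega)) hs
  · intro t ht hts
    refine Finset.sum_eq_zero (fun j hj => ?_)
    rw [Finset.mem_range] at ht hj
    rw [if_neg (by omega)]
  · intro hs; exact absurd (Finset.mem_range.2 (by omega)) hs

end LMstuff

section Interp
variable {Fq F : Type*} [Field Fq] [Fintype Fq] [Field F] [Fintype F] [Algebra Fq F]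

lemma Pc_sub {q : ℕ} (c d : ℕ → F) (L : ℕ) :
    Pc q c L - Pc q d L = Pc q (fun t => c t - d t) L := by
  unfold Pc
  rw [← Finset.sum_sub_distrib]
  exact Finset.sum_congr rfl (fun t _ => by rw [Polynomial.monomial_sub])

lemma eval_Pc_zero {q : ℕ} (hq : 0 < q) (c : ℕ → F) (L : ℕ) :
    (Pc q c L).eval 0 = 0 := by
  rw [eval_Pc]
  refine Finset.sum_eq_zero (fun t _ => ?_)
  rw [zero_pow (by positivity), mul_zero]

lemma eval_Pc_sum_smul (p e : ℕ) [Fact p.Prime] [CharP F p]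
    (hqe : Fintype.card Fq = p ^ e) (c : ℕ → F) (L : ℕ) {ι : Type*} (s : Finset ι)
    (r : ι → Fq) (y : ι → F) :
    (Pc (Fintype.card Fq) c L).eval (∑ i ∈ s, r i • y i) =
      ∑ i ∈ s, r i • (Pc (Fintype.card Fq) c L).eval (y i) := by
  set q := Fintype.card Fq with hqdef
  rw [eval_Pc]
  rw [show (∑ i ∈ s, r i • (Pc q c L).eval (y i))
      = ∑ i ∈ s, ∑ t ∈ Finset.range L, r i • (c t * y i ^ q ^ t) from
    Finset.sum_congr rfl (fun i _ => by rw [eval_Pc, Finset.smul_sum])]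
  rw [Finset.sum_comm]
  refine Finset.sum_congr rfl (fun t _ => ?_)
  have hpow : q ^ t = p ^ (e * t) := by rw [hqe, ← pow_mul]
  rw [hpow, sum_pow_char_pow, Finset.mul_sum]
  refine Finset.sum_congr rfl (fun i _ => ?_)
  have hsm : (r i • y i) ^ p ^ (e * t) = r i • y i ^ p ^ (e * t) := by
    rw [Algebra.smul_def, mul_pow, Algebra.smul_def, ← map_pow, ← hpow]
    rw [FiniteField.pow_card_pow]
  rw [hsm, mul_smul_comm]

lemma moore_interp (p e : ℕ) [Fact p.Prime] [CharP F p]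
    (hqe : Fintype.card Fq = p ^ e) {n : ℕ} (g : Fin n → F)
    (hg : LinearIndependent Fq g) (v : Fin n → F) :
    ∃ c : ℕ → F, ∀ i,
      (Pc (Fintype.card Fq) c (Module.finrank Fq F)).eval (g i) = v i := by
  classical
  set q := Fintype.card Fq with hqdef
  set m := Module.finrank Fq F with hmdef
  have hq : 1 < q := Fintype.one_lt_card
  have hs : LinearIndepOn Fq id (Set.range g) := hg.linearIndepOn_id
  set tt := hs.extend (Set.subset_univ _) with htt
  let b : Module.Basis tt Fq F := Module.Basis.extend hs
  haveI : Fintype tt := (Set.toFinite tt).fintype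
  have hcard : Fintype.card tt = m := (Module.finrank_eq_card_basis b).symm
  let eqv : Fin m ≃ tt := (Fintype.equivFinOfCardEq hcard).symm
  let cf : (tt → F) → ℕ → F := fun cc s => if h : s < m then cc (eqv ⟨s, h⟩) else 0
  let T : (tt → F) → (tt → F) := fun cc i => (Pc q (cf cc) m).eval (b i)
  have hTinj : Function.Injective T := by
    intro c1 c2 hT
    have hsub : Pc q (cf c1) m - Pc q (cf c2) m = Pc q (fun t => cf c1 t - cf c2 t) m :=
      Pc_sub _ _ _
    have hvanb : ∀ i : tt, (Pc q (fun t => cf c1 t - cf c2 t) m).eval (b i) = 0 := by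
      intro i
      rw [← hsub, Polynomial.eval_sub]
      exact sub_eq_zero.2 (congrFun hT i)
    have hvan : ∀ x : F, (Pc q (fun t => cf c1 t - cf c2 t) m).eval x = 0 := by
      intro x
      have hx := Module.Basis.sum_repr b x
      rw [← hx, eval_Pc_sum_smul p e hqe]
      simp only [← hqdef, hvanb, smul_zero, Finset.sum_const_zero]
    have hm : 0 < m := Module.finrank_pos
    have hdeg : (Pc q (fun t => cf c1 t - cf c2 t) m).natDegree < Fintype.card F := by
      refine lt_of_le_of_lt (natDegree_Pc_le hq _ m hm) ?_
      rw [Module.card_eq_pow_finrank (K := Fq) (V := F), ← hqdef, ← hmdef]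
      exact Nat.pow_lt_pow_right hq (by omega)
    have hL0 : Pc q (fun t => cf c1 t - cf c2 t) m = 0 :=
      Polynomial.eq_zero_of_natDegree_lt_card_of_eval_eq_zero _ Function.injective_id
        (fun x => hvan x) (by simpa using hdeg)
    funext i
    have hco := congrArg (fun P : Polynomial F => P.coeff (q ^ ((eqv.symm i : Fin m) : ℕ))) hL0
    simp only [Polynomial.coeff_zero] at hco
    rw [coeff_Pc hq, if_pos (eqv.symm i).isLt] at hco
    simp only [cf, dif_pos (eqv.symm i).isLt, Fin.eta, Equiv.apply_symm_apply] at hco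
    exact sub_eq_zero.1 hco
  have hTsurj : Function.Surjective T := Finite.injective_iff_surjective.1 hTinj
  let wv : tt → F := fun j => if h : ∃ i, g i = (j : F) then v h.choose else 0
  obtain ⟨cc, hcc⟩ := hTsurj wv
  refine ⟨cf cc, fun i => ?_⟩
  have hmem : (g i) ∈ tt := hs.subset_extend _ ⟨i, rfl⟩
  have hbi : b ⟨g i, hmem⟩ = g i := by
    show Module.Basis.extend hs _ = _
    rw [Module.Basis.extend_apply_self]
  have h1 : T cc ⟨g i, hmem⟩ = wv ⟨g i, hmem⟩ := congrFun hcc _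
  have hex : ∃ i', g i' = g i := ⟨i, rfl⟩
  have hch : hex.choose = i := hg.injective hex.choose_spec
  show (Pc q (cf cc) m).eval (g i) = v i
  rw [← hbi]
  refine h1.trans ?_
  show dite _ _ _ = v i
  rw [dif_pos hex, hch]

end Interp

section Aux2
variable {F : Type*} [Field F] {q : ℕ}

/-- pad a `Fin L`-indexed coefficient vector to `ℕ`. -/
def padc {F : Type*} [Field F] {L : ℕ} (c : Fin L → F) : ℕ → F :=
  fun t => if h : t < L then c ⟨t, h⟩ else 0

lemma padc_add {L : ℕ} (c c' : Fin L → F) :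
    padc (c + c') = fun t => padc c t + padc c' t := by
  funext t
  unfold padc
  split
  · rfl
  · rw [add_zero]

lemma Pc_congr (c c' : ℕ → F) (L : ℕ) (h : ∀ t, t < L → c t = c' t) :
    Pc q c L = Pc q c' L :=
  Finset.sum_congr rfl (fun t ht => by rw [h t (Finset.mem_range.1 ht)])

lemma Pc_zero (L : ℕ) : Pc q (fun _ => (0 : F)) L = 0 := by
  unfold Pc
  simp

lemma supp_Pc_range (hq : 1 < q) (c : ℕ → F) (L j : ℕ)
    (h : q ^ j ∈ (Pc q c L).support) : j < L := by
  by_contra hc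
  rw [Polynomial.mem_support_iff, coeff_Pc hq, if_neg hc] at h
  exact h rfl

lemma coeff_Pc_padc (hq : 1 < q) {L : ℕ} (c : Fin L → F) (t : Fin L) :
    (Pc q (padc c) L).coeff (q ^ (t : ℕ)) = c t := by
  rw [coeff_Pc hq, if_pos t.isLt]
  unfold padc
  rw [dif_pos t.isLt, Fin.eta]

lemma isLin_add {f g : Polynomial F} (hf : IsLin q f) (hg : IsLin q g) :
    IsLin q (f + g) := by
  intro i hi
  rcases Finset.mem_union.1 (Polynomial.support_add hi) with h | h
  · exact hf i h
  · exact hg i h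

lemma isLin_comp (p e : ℕ) [Fact p.Prime] [CharP F p] (hqe : q = p ^ e) (hq : 1 < q)
    (c : ℕ → F) (S : ℕ) (b : Polynomial F) (hb : IsLin q b) :
    IsLin q ((Pc q c S).comp b) := by
  intro i hi
  by_contra hcon
  push_neg at hcon
  rw [Polynomial.mem_support_iff] at hi
  rw [repr_lin hq b hb (b.natDegree + 1) (supp_lt_bound hq b)] at hi
  exact hi (coeff_comp_Pc_npow p e hqe _ _ _ _ _ (fun t he => hcon t he))

lemma comp_coeff_npow (p e : ℕ) [Fact p.Prime] [CharP F p] (hqe : q = p ^ e) (hq : 1 < q)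
    (c : ℕ → F) (S : ℕ) (b : Polynomial F) (hb : IsLin q b) (i : ℕ)
    (h : ∀ t : ℕ, i ≠ q ^ t) : ((Pc q c S).comp b).coeff i = 0 := by
  rw [repr_lin hq b hb (b.natDegree + 1) (supp_lt_bound hq b)]
  exact coeff_comp_Pc_npow p e hqe _ _ _ _ _ h

lemma eval_Pc_add (p e : ℕ) [Fact p.Prime] [CharP F p] (hqe : q = p ^ e)
    (c : ℕ → F) (L : ℕ) (x y : F) :
    (Pc q c L).eval (x + y) = (Pc q c L).eval x + (Pc q c L).eval y := by
  rw [eval_Pc, eval_Pc, eval_Pc, ← Finset.sum_add_distrib]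
  refine Finset.sum_congr rfl (fun t _ => ?_)
  have hpow : q ^ t = p ^ (e * t) := by rw [hqe, ← pow_mul]
  rw [hpow, add_pow_char_pow, mul_add]

/-- the maximal `q`-exponent of a nonzero linearized polynomial. -/
lemma exists_max_qexp (hq : 1 < q) (a : Polynomial F) (ha : IsLin q a) (h0 : a ≠ 0) :
    ∃ s : ℕ, q ^ s ∈ a.support ∧ ∀ t : ℕ, q ^ t ∈ a.support → t ≤ s := by
  classical
  set TS := (Finset.range (a.natDegree + 1)).filter (fun t => q ^ t ∈ a.support) with hTS
  have hne : TS.Nonempty := by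
    obtain ⟨i, hi⟩ := Polynomial.support_nonempty.2 h0
    obtain ⟨j, rfl⟩ := ha i hi
    exact ⟨j, Finset.mem_filter.2 ⟨Finset.mem_range.2 (supp_lt_bound hq a j hi), hi⟩⟩
  refine ⟨TS.max' hne, (Finset.mem_filter.1 (TS.max'_mem hne)).2, fun t ht => ?_⟩
  exact Finset.le_max' TS t (Finset.mem_filter.2 ⟨Finset.mem_range.2 (supp_lt_bound hq a t ht), ht⟩)

end Aux2

section CombBound
variable {F : Type*} [Field F] {q : ℕ}

lemma comb_bound (hq : 1 < q) (p e : ℕ) [Fact p.Prime] [CharP F p] (hqe : q = p ^ e)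
    (w : Fin 2 → ℕ) (B0 B1 : Fin 2 → Polynomial F) (mb0 mb1 : Mon 2)
    (hlin0 : IsLinVec q B0) (hlin1 : IsLinVec q B1)
    (hLM0 : IsLM q (wlt w) B0 mb0) (hLM1 : IsLM q (wlt w) B1 mb1)
    (hp0 : mb0.pos = 0) (hp1 : mb1.pos = 1)
    (a0 a1 : Polynomial F) (halin0 : IsLin q a0) (halin1 : IsLin q a1) (N : ℕ)
    (hsup : ∀ (pos : Fin 2) (E : ℕ),
      q ^ E ∈ (a0.comp (B0 pos) + a1.comp (B1 pos)).support → E + w pos ≤ N) :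
    (∀ t : ℕ, q ^ t ∈ a0.support → t + mb0.k + w mb0.pos ≤ N) ∧
    (∀ t : ℕ, q ^ t ∈ a1.support → t + mb1.k + w mb1.pos ≤ N) := by
  by_cases h0 : a0 = 0
  · refine ⟨fun t ht => by rw [h0] at ht; simp at ht, fun t ht => ?_⟩
    by_cases h1 : a1 = 0
    · rw [h1] at ht; simp at ht
    obtain ⟨s1, hs1mem, hs1max⟩ := exists_max_qexp hq a1 halin1 h1
    have hr1 : a1 = Pc q (fun t => a1.coeff (q ^ t)) (s1 + 1) :=
      repr_lin hq a1 halin1 _ (fun j hj => by have := hs1max j hj; omega)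
    have htop1 : (a1.comp (B1 mb1.pos)).coeff (q ^ (s1 + mb1.k)) ≠ 0 := by
      rw [hr1, comp_coeff_top hq p e hqe _ s1 _ (hlin1 mb1.pos) mb1.k
        (LM_supp_le_same w B1 mb1 hLM1)]
      exact mul_ne_zero (Polynomial.mem_support_iff.1 hs1mem)
        (pow_ne_zero _ (Polynomial.mem_support_iff.1 hLM1.1))
    have hnz : q ^ (s1 + mb1.k) ∈ (a0.comp (B0 mb1.pos) + a1.comp (B1 mb1.pos)).support := by
      rw [Polynomial.mem_support_iff, Polynomial.coeff_add, h0, Polynomial.zero_comp,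
        Polynomial.coeff_zero, zero_add]
      exact htop1
    have hN := hsup mb1.pos _ hnz
    have := hs1max t ht
    omega
  by_cases h1 : a1 = 0
  · refine ⟨fun t ht => ?_, fun t ht => by rw [h1] at ht; simp at ht⟩
    obtain ⟨s0, hs0mem, hs0max⟩ := exists_max_qexp hq a0 halin0 h0
    have hr0 : a0 = Pc q (fun t => a0.coeff (q ^ t)) (s0 + 1) :=
      repr_lin hq a0 halin0 _ (fun j hj => by have := hs0max j hj; omega)
    have htop0 : (a0.comp (B0 mb0.pos)).coeff (q ^ (s0 + mb0.k)) ≠ 0 := by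
      rw [hr0, comp_coeff_top hq p e hqe _ s0 _ (hlin0 mb0.pos) mb0.k
        (LM_supp_le_same w B0 mb0 hLM0)]
      exact mul_ne_zero (Polynomial.mem_support_iff.1 hs0mem)
        (pow_ne_zero _ (Polynomial.mem_support_iff.1 hLM0.1))
    have hnz : q ^ (s0 + mb0.k) ∈ (a0.comp (B0 mb0.pos) + a1.comp (B1 mb0.pos)).support := by
      rw [Polynomial.mem_support_iff, Polynomial.coeff_add, h1, Polynomial.zero_comp,
        Polynomial.coeff_zero, add_zero]
      exact htop0
    have hN := hsup mb0.pos _ hnz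
    have := hs0max t ht
    omega
  -- both nonzero
  obtain ⟨s0, hs0mem, hs0max⟩ := exists_max_qexp hq a0 halin0 h0
  obtain ⟨s1, hs1mem, hs1max⟩ := exists_max_qexp hq a1 halin1 h1
  have hr0 : a0 = Pc q (fun t => a0.coeff (q ^ t)) (s0 + 1) :=
    repr_lin hq a0 halin0 _ (fun j hj => by have := hs0max j hj; omega)
  have hr1 : a1 = Pc q (fun t => a1.coeff (q ^ t)) (s1 + 1) :=
    repr_lin hq a1 halin1 _ (fun j hj => by have := hs1max j hj; omega)
  have htop0 : (a0.comp (B0 mb0.pos)).coeff (q ^ (s0 + mb0.k)) ≠ 0 := by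
    rw [hr0, comp_coeff_top hq p e hqe _ s0 _ (hlin0 mb0.pos) mb0.k
      (LM_supp_le_same w B0 mb0 hLM0)]
    exact mul_ne_zero (Polynomial.mem_support_iff.1 hs0mem)
      (pow_ne_zero _ (Polynomial.mem_support_iff.1 hLM0.1))
  have htop1 : (a1.comp (B1 mb1.pos)).coeff (q ^ (s1 + mb1.k)) ≠ 0 := by
    rw [hr1, comp_coeff_top hq p e hqe _ s1 _ (hlin1 mb1.pos) mb1.k
      (LM_supp_le_same w B1 mb1 hLM1)]
    exact mul_ne_zero (Polynomial.mem_support_iff.1 hs1mem)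
      (pow_ne_zero _ (Polynomial.mem_support_iff.1 hLM1.1))
  by_cases hW : s0 + mb0.k + w mb0.pos ≤ s1 + mb1.k + w mb1.pos
  · -- top of a1 ∘ B1 survives
    have hz : (a0.comp (B0 mb1.pos)).coeff (q ^ (s1 + mb1.k)) = 0 := by
      by_contra hnz
      rw [hr0] at hnz
      obtain ⟨t, j, ht, htj, -, hmem⟩ :=
        comp_coeff_nonzero_exists hq p e hqe _ _ _ (hlin0 mb1.pos) _ hnz
      rcases hLM0.2 ⟨j, mb1.pos⟩ hmem with hEq | hlt
      · have := congrArg Mon.pos hEq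
        rw [hp0, hp1] at this
        exact absurd this (by decide)
      · unfold wlt at hlt
        dsimp only at hlt
        rcases hlt with hlt | ⟨hEqw, hposlt⟩
        · omega
        · rw [hp0, hp1] at hposlt
          exact absurd hposlt (by decide)
    have hnz : q ^ (s1 + mb1.k) ∈ (a0.comp (B0 mb1.pos) + a1.comp (B1 mb1.pos)).support := by
      rw [Polynomial.mem_support_iff, Polynomial.coeff_add, hz, zero_add]
      exact htop1
    have hN := hsup mb1.pos _ hnz
    exact ⟨fun t ht => by have := hs0max t ht; omega,
           fun t ht => by have := hs1max t ht; omega⟩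
  · -- top of a0 ∘ B0 survives
    have hz : (a1.comp (B1 mb0.pos)).coeff (q ^ (s0 + mb0.k)) = 0 := by
      by_contra hnz
      rw [hr1] at hnz
      obtain ⟨t, j, ht, htj, -, hmem⟩ :=
        comp_coeff_nonzero_exists hq p e hqe _ _ _ (hlin1 mb0.pos) _ hnz
      rcases hLM1.2 ⟨j, mb0.pos⟩ hmem with hEq | hlt
      · have := congrArg Mon.pos hEq
        rw [hp0, hp1] at this
        exact absurd this (by decide)
      · unfold wlt at hlt
        dsimp only at hlt
        rcases hlt with hlt | ⟨hEqw, -⟩ <;> omega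
    have hnz : q ^ (s0 + mb0.k) ∈ (a0.comp (B0 mb0.pos) + a1.comp (B1 mb0.pos)).support := by
      rw [Polynomial.mem_support_iff, Polynomial.coeff_add, hz, add_zero]
      exact htop0
    have hN := hsup mb0.pos _ hnz
    exact ⟨fun t ht => by have := hs0max t ht; omega,
           fun t ht => by have := hs1max t ht; omega⟩

end CombBound

/-- If `{b⁰, b¹}` is a minimal basis (leading positions `1` resp. `2`) of the
interpolation module `M(r)` with respect to the `(0, k-1)`-weighted
term-over-position order, then the `(0, k-1)`-weighted `q`-degrees `l1, l2` of
`b⁰, b¹` satisfy `l1 + l2 = n + k - 1`. -/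
theorem stmt17 {Fq F : Type*} [Field Fq] [Fintype Fq] [Field F] [Fintype F] [Algebra Fq F]
    {n k : ℕ} (hk : 0 < k) (hkn : k ≤ n) (g : Fin n → F) (hg : LinearIndependent Fq g)
    (r : Fin n → F)
    (B : Fin 2 → Fin 2 → Polynomial F)
    (hB : IsBasisOf (Fintype.card Fq) (InterpMod (Fintype.card Fq) g r) B)
    (mb : Fin 2 → Mon 2)
    (hmb : ∀ i, IsLM (Fintype.card Fq) (wlt ![0, k - 1]) (B i) (mb i))
    (hpos : ∀ i, (mb i).pos = i)
    (l1 l2 : ℕ)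
    (h1 : WDegIs (Fintype.card Fq) ![0, k - 1] (B 0) l1)
    (h2 : WDegIs (Fintype.card Fq) ![0, k - 1] (B 1) l2) :
    l1 + l2 = n + k - 1 := by
  classical
  have hq : 1 < Fintype.card Fq := Fintype.one_lt_card
  set q := Fintype.card Fq with hqdef
  set p := ringChar Fq with hpdef
  haveI hfp : Fact (Nat.Prime p) := ⟨CharP.char_is_prime Fq p⟩
  haveI : CharP F p := charP_of_injective_algebraMap (algebraMap Fq F).injective p
  obtain ⟨epn, -, hcardq⟩ := FiniteField.card Fq p
  have hqe : q = p ^ (epn : ℕ) := hcardq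
  set e := (epn : ℕ) with hedef
  set w : Fin 2 → ℕ := ![0, k - 1] with hwdef
  have hw0 : w 0 = 0 := rfl
  have hw1 : w 1 = k - 1 := rfl
  -- identify the weighted degrees with the leading monomial weights
  have hdeg : ∀ i : Fin 2, ∀ l : ℕ, WDegIs q w (B i) l → l = (mb i).k + w (mb i).pos := by
    intro i l hW
    have hle : (mb i).k + w (mb i).pos ≤ l := hW.2 _ (hmb i).1
    obtain ⟨mo, hmo, hmoeq⟩ := hW.1
    have h2 : mo.k + w mo.pos ≤ (mb i).k + w (mb i).pos := by
      rcases (hmb i).2 mo hmo with h | h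
      · rw [h]
      · unfold wlt at h; rcases h with h | ⟨h, -⟩ <;> omega
    omega
  have hl1 : l1 = (mb 0).k := by
    have := hdeg 0 l1 h1; rw [hpos 0, hw0] at this; omega
  have hl2 : l2 = (mb 1).k + (k - 1) := by
    have := hdeg 1 l2 h2; rw [hpos 1, hw1] at this; omega
  set d0 := (mb 0).k with hd0
  set d1 := (mb 1).k with hd1
  suffices hsum : d0 + d1 = n by omega
  -- sizes
  set m := Module.finrank Fq F with hmdef
  have hm : 0 < m := Module.finrank_pos
  set N := m + d0 + d1 + k with hNdef
  set N2 := N - (k - 1) with hN2def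
  set M0 := N - d0 with hM0def
  set M1 := N2 - d1 with hM1def
  -- facts about B
  have hBlin : ∀ i : Fin 2, IsLinVec q (B i) := fun i => (hB.1 i).1
  have hBev : ∀ (i : Fin 2) idx, (B i 0).eval (g idx) + (B i 1).eval (r idx) = 0 :=
    fun i => (hB.1 i).2
  have hsupB0 : ∀ (pos : Fin 2) (j : ℕ), q ^ j ∈ (B 0 pos).support → j + w pos ≤ d0 := by
    intro pos j hj
    have := LM_supp_le w (B 0) (mb 0) (hmb 0) pos j hj
    rw [hpos 0, hw0] at this; omega
  have hsupB1 : ∀ (pos : Fin 2) (j : ℕ), q ^ j ∈ (B 1 pos).support → j + w pos ≤ d1 + (k - 1) := by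
    intro pos j hj
    have := LM_supp_le w (B 1) (mb 1) (hmb 1) pos j hj
    rw [hpos 1, hw1] at this; omega
  -- the evaluation map
  let Ef : ((Fin (N + 1) → F) × (Fin (N2 + 1) → F)) → (Fin n → F) := fun cd i =>
    (Pc q (padc cd.1) (N + 1)).eval (g i) + (Pc q (padc cd.2) (N2 + 1)).eval (r i)
  have hEadd : ∀ x y, Ef (x + y) = Ef x + Ef y := by
    intro x y
    funext i
    simp only [Ef, Prod.fst_add, Prod.snd_add, Pi.add_apply, padc_add, Pc_add,
      Polynomial.eval_add]
    ring
  let φ : ((Fin (N + 1) → F) × (Fin (N2 + 1) → F)) →+ (Fin n → F) := AddMonoidHom.mk' Ef hEadd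
  -- surjectivity of φ
  have hφsurj : Function.Surjective φ := by
    intro v
    obtain ⟨c, hc⟩ := moore_interp p e hqe g hg v
    refine ⟨((fun t : Fin (N + 1) => if (t : ℕ) < m then c t else 0), 0), ?_⟩
    have h2 : Pc q (padc (0 : Fin (N2 + 1) → F)) (N2 + 1) = 0 := by
      rw [show padc (0 : Fin (N2 + 1) → F) = fun _ => (0 : F) from
        funext fun t => by unfold padc; split <;> rfl, Pc_zero]
    have h1 : Pc q (padc (fun t : Fin (N + 1) => if (t : ℕ) < m then c t else 0)) (N + 1)
        = Pc q (fun t => if t < m then c t else 0) (N + 1) :=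
      Pc_congr _ _ _ (fun t ht => by unfold padc; rw [dif_pos ht])
    have h3 : Pc q (fun t => if t < m then c t else 0) (N + 1) = Pc q c m := by
      unfold Pc
      rw [← Finset.sum_subset (Finset.range_subset_range.2 (show m ≤ N + 1 by omega))
        (fun x _ hx => by
          show Polynomial.monomial (q ^ x) (if x < m then c x else 0) = 0
          rw [if_neg (fun hlt => hx (Finset.mem_range.2 hlt)), Polynomial.monomial_zero_right])]
      exact Finset.sum_congr rfl (fun t ht => by
        show Polynomial.monomial (q ^ t) (if t < m then c t else 0) = Polynomial.monomial (q ^ t) (c t)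
        rw [if_pos (Finset.mem_range.1 ht)])
    funext i
    show Ef _ i = v i
    simp only [Ef]
    rw [h1, h3, h2, Polynomial.eval_zero, add_zero]
    exact hc i
  -- the combination map
  let comb : ((Fin (M0 + 1) → F) × (Fin (M1 + 1) → F)) → (Fin 2 → Polynomial F) := fun uv j =>
    (Pc q (padc uv.1) (M0 + 1)).comp (B 0 j) + (Pc q (padc uv.2) (M1 + 1)).comp (B 1 j)
  let Cf : ((Fin (M0 + 1) → F) × (Fin (M1 + 1) → F)) → ((Fin (N + 1) → F) × (Fin (N2 + 1) → F)) :=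
    fun uv => (fun t => (comb uv 0).coeff (q ^ (t : ℕ)), fun t => (comb uv 1).coeff (q ^ (t : ℕ)))
  have hcombsup : ∀ uv (pos : Fin 2) (E : ℕ),
      q ^ E ∈ ((comb uv) pos).support → E + w pos ≤ N := by
    intro uv pos E hE
    rw [Polynomial.mem_support_iff] at hE
    have hor : ((Pc q (padc uv.1) (M0 + 1)).comp (B 0 pos)).coeff (q ^ E) ≠ 0 ∨
        ((Pc q (padc uv.2) (M1 + 1)).comp (B 1 pos)).coeff (q ^ E) ≠ 0 := by
      by_contra hcon
      push_neg at hcon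
      exact hE (by
        show ((Pc q (padc uv.1) (M0 + 1)).comp (B 0 pos)
          + (Pc q (padc uv.2) (M1 + 1)).comp (B 1 pos)).coeff (q ^ E) = 0
        rw [Polynomial.coeff_add, hcon.1, hcon.2, add_zero])
    rcases hor with h | h
    · obtain ⟨t, j, ht, htj, -, hmem⟩ :=
        comp_coeff_nonzero_exists hq p e hqe _ _ _ (hBlin 0 pos) _ h
      have := hsupB0 pos j hmem
      omega
    · obtain ⟨t, j, ht, htj, -, hmem⟩ :=
        comp_coeff_nonzero_exists hq p e hqe _ _ _ (hBlin 1 pos) _ h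
      have := hsupB1 pos j hmem
      omega
  have hcomblin : ∀ uv, IsLinVec q (comb uv) := fun uv j =>
    isLin_add (isLin_comp p e hqe hq _ _ _ (hBlin 0 j)) (isLin_comp p e hqe hq _ _ _ (hBlin 1 j))
  have hcombev : ∀ uv idx, (comb uv 0).eval (g idx) + (comb uv 1).eval (r idx) = 0 := by
    intro uv idx
    simp only [comb, Polynomial.eval_add, Polynomial.eval_comp]
    have e0 : (Pc q (padc uv.1) (M0 + 1)).eval ((B 0 0).eval (g idx))
        + (Pc q (padc uv.1) (M0 + 1)).eval ((B 0 1).eval (r idx)) = 0 := by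
      rw [← eval_Pc_add p e hqe, hBev 0 idx, eval_Pc_zero (by omega)]
    have e1 : (Pc q (padc uv.2) (M1 + 1)).eval ((B 1 0).eval (g idx))
        + (Pc q (padc uv.2) (M1 + 1)).eval ((B 1 1).eval (r idx)) = 0 := by
      rw [← eval_Pc_add p e hqe, hBev 1 idx, eval_Pc_zero (by omega)]
    linear_combination e0 + e1
  have hCc0 : ∀ uv, Pc q (padc (Cf uv).1) (N + 1) = comb uv 0 := by
    intro uv
    have hrep := repr_lin hq (comb uv 0) (hcomblin uv 0) (N + 1)
      (fun j hj => by have := hcombsup uv 0 j hj; rw [hw0] at this; omega)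
    exact (Pc_congr _ _ _ (fun t ht => by unfold padc; rw [dif_pos ht])).trans hrep.symm
  have hCc1 : ∀ uv, Pc q (padc (Cf uv).2) (N2 + 1) = comb uv 1 := by
    intro uv
    have hrep := repr_lin hq (comb uv 1) (hcomblin uv 1) (N2 + 1)
      (fun j hj => by have := hcombsup uv 1 j hj; rw [hw1] at this; omega)
    exact (Pc_congr _ _ _ (fun t ht => by unfold padc; rw [dif_pos ht])).trans hrep.symm
  have hCker : ∀ uv, φ (Cf uv) = 0 := by
    intro uv
    funext i
    show Ef (Cf uv) i = (0 : Fin n → F) i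
    simp only [Ef, Pi.zero_apply]
    rw [hCc0, hCc1]
    exact hcombev uv i
  -- Cf is additive and injective
  have hcombadd : ∀ x y (j : Fin 2), comb (x + y) j = comb x j + comb y j := by
    intro x y j
    simp only [comb, Prod.fst_add, Prod.snd_add, padc_add, Pc_add, Polynomial.add_comp]
    ring
  have hCadd : ∀ x y, Cf (x + y) = Cf x + Cf y := by
    intro x y
    refine Prod.ext ?_ ?_ <;> funext t <;>
      simp only [Cf, hcombadd, Polynomial.coeff_add, Prod.fst_add, Prod.snd_add, Pi.add_apply]
  have hCker0 : ∀ uv, Cf uv = 0 → uv = 0 := by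
    intro uv hC0
    have hcomb0 : ∀ j : Fin 2, comb uv j = 0 := by
      intro j
      ext i
      rw [Polynomial.coeff_zero]
      by_cases hqp : ∃ t : ℕ, i = q ^ t
      · obtain ⟨t, rfl⟩ := hqp
        fin_cases j
        · by_cases htN : t < N + 1
          · have := congrFun (congrArg Prod.fst hC0) ⟨t, htN⟩
            exact this
          · by_contra hco
            have := hcombsup uv 0 t (Polynomial.mem_support_iff.2 hco)
            rw [hw0] at this; omega
        · by_cases htN : t < N2 + 1
          · have := congrFun (congrArg Prod.snd hC0) ⟨t, htN⟩
            exact this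
          · by_contra hco
            have := hcombsup uv 1 t (Polynomial.mem_support_iff.2 hco)
            rw [hw1] at this; omega
      · push_neg at hqp
        show ((Pc q (padc uv.1) (M0 + 1)).comp (B 0 j)
          + (Pc q (padc uv.2) (M1 + 1)).comp (B 1 j)).coeff i = 0
        rw [Polynomial.coeff_add,
          comp_coeff_npow p e hqe hq _ _ _ (hBlin 0 j) _ (fun t => hqp t),
          comp_coeff_npow p e hqe hq _ _ _ (hBlin 1 j) _ (fun t => hqp t), add_zero]
    have hz := hB.2.2 ![Pc q (padc uv.1) (M0 + 1), Pc q (padc uv.2) (M1 + 1)]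
      (by intro i; fin_cases i <;> exact isLin_Pc _ _)
      (by
        funext j
        rw [Fin.sum_univ_two]
        simp only [Matrix.cons_val_zero, Matrix.cons_val_one, Matrix.head_cons]
        exact hcomb0 j)
    have hz0 : Pc q (padc uv.1) (M0 + 1) = 0 := by
      have := hz 0; simpa using this
    have hz1 : Pc q (padc uv.2) (M1 + 1) = 0 := by
      have := hz 1; simpa using this
    have hu1 : uv.1 = 0 := by
      funext t
      have hh := congrArg (fun P : Polynomial F => P.coeff (q ^ (t : ℕ))) hz0
      simp only [Polynomial.coeff_zero] at hh
      rw [coeff_Pc_padc hq] at hh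
      simpa using hh
    have hu2 : uv.2 = 0 := by
      funext t
      have hh := congrArg (fun P : Polynomial F => P.coeff (q ^ (t : ℕ))) hz1
      simp only [Polynomial.coeff_zero] at hh
      rw [coeff_Pc_padc hq] at hh
      simpa using hh
    exact Prod.ext hu1 hu2
  have hCinj : Function.Injective Cf := by
    have := (injective_iff_map_eq_zero (AddMonoidHom.mk' Cf hCadd)).2 hCker0
    exact this
  -- kernel of φ is the range of Cf
  have hkerC : ∀ x, φ x = 0 → ∃ uv, Cf uv = x := by
    intro x hx
    have hfmem : (![Pc q (padc x.1) (N + 1), Pc q (padc x.2) (N2 + 1)]) ∈ InterpMod q g r := by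
      constructor
      · intro i
        fin_cases i
        · simpa using isLin_Pc (padc x.1) (N + 1)
        · simpa using isLin_Pc (padc x.2) (N2 + 1)
      · intro idx
        have := congrFun hx idx
        simpa [Ef, φ] using this
    obtain ⟨a, halin, haeq⟩ := hB.2.1 _ hfmem
    have haeq2 : ∀ j : Fin 2, (![Pc q (padc x.1) (N + 1), Pc q (padc x.2) (N2 + 1)] : Fin 2 → Polynomial F) j
        = (a 0).comp (B 0 j) + (a 1).comp (B 1 j) := by
      intro j
      rw [haeq]
      show (∑ i : Fin 2, (a i).comp (B i j)) = _
      rw [Fin.sum_univ_two]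
    have hsupf : ∀ (pos : Fin 2) (E : ℕ),
        q ^ E ∈ ((a 0).comp (B 0 pos) + (a 1).comp (B 1 pos)).support → E + w pos ≤ N := by
      intro pos E hE
      rw [← haeq2 pos] at hE
      fin_cases pos
      · have hE' : q ^ E ∈ (Pc q (padc x.1) (N + 1)).support := hE
        have := supp_Pc_range hq _ _ _ hE'
        show E + w 0 ≤ N
        rw [hw0]; omega
      · have hE' : q ^ E ∈ (Pc q (padc x.2) (N2 + 1)).support := hE
        have := supp_Pc_range hq _ _ _ hE'
        show E + w 1 ≤ N
        rw [hw1]; omega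
    have hbnd := comb_bound hq p e hqe w (B 0) (B 1) (mb 0) (mb 1) (hBlin 0) (hBlin 1)
      (hmb 0) (hmb 1) (hpos 0) (hpos 1) (a 0) (a 1) (halin 0) (halin 1) N hsupf
    have hb0 : ∀ t : ℕ, q ^ t ∈ (a 0).support → t < M0 + 1 := by
      intro t ht
      have := hbnd.1 t ht
      rw [hpos 0, hw0] at this; omega
    have hb1 : ∀ t : ℕ, q ^ t ∈ (a 1).support → t < M1 + 1 := by
      intro t ht
      have := hbnd.2 t ht
      rw [hpos 1, hw1] at this; omega
    refine ⟨((fun t : Fin (M0 + 1) => (a 0).coeff (q ^ (t : ℕ))),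
             (fun t : Fin (M1 + 1) => (a 1).coeff (q ^ (t : ℕ)))), ?_⟩
    have hA0 : Pc q (padc (fun t : Fin (M0 + 1) => (a 0).coeff (q ^ (t : ℕ)))) (M0 + 1) = a 0 := by
      conv_rhs => rw [repr_lin hq (a 0) (halin 0) (M0 + 1) hb0]
      exact Pc_congr _ _ _ (fun t ht => by unfold padc; rw [dif_pos ht])
    have hA1 : Pc q (padc (fun t : Fin (M1 + 1) => (a 1).coeff (q ^ (t : ℕ)))) (M1 + 1) = a 1 := by
      conv_rhs => rw [repr_lin hq (a 1) (halin 1) (M1 + 1) hb1]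
      exact Pc_congr _ _ _ (fun t ht => by unfold padc; rw [dif_pos ht])
    have hcombeq : ∀ j : Fin 2, comb ((fun t : Fin (M0 + 1) => (a 0).coeff (q ^ (t : ℕ))),
        (fun t : Fin (M1 + 1) => (a 1).coeff (q ^ (t : ℕ)))) j
        = (![Pc q (padc x.1) (N + 1), Pc q (padc x.2) (N2 + 1)] : Fin 2 → Polynomial F) j := by
      intro j
      rw [haeq2 j]
      simp only [comb]
      rw [hA0, hA1]
    refine Prod.ext ?_ ?_
    · funext t
      show (comb _ 0).coeff (q ^ (t : ℕ)) = x.1 t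
      rw [hcombeq 0]
      simp only [Matrix.cons_val_zero]
      rw [coeff_Pc_padc hq]
    · funext t
      show (comb _ 1).coeff (q ^ (t : ℕ)) = x.2 t
      rw [hcombeq 1]
      simp only [Matrix.cons_val_one, Matrix.head_cons, Matrix.cons_val_zero]
      rw [coeff_Pc_padc hq]
  -- counting
  have hcF : 1 < Fintype.card F := Fintype.one_lt_card
  have hcard1 : Nat.card ((Fin (N + 1) → F) × (Fin (N2 + 1) → F))
      = Nat.card (((Fin (N + 1) → F) × (Fin (N2 + 1) → F)) ⧸ φ.ker) * Nat.card φ.ker :=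
    AddSubgroup.card_eq_card_quotient_mul_card_addSubgroup _
  have hcardQ : Nat.card (((Fin (N + 1) → F) × (Fin (N2 + 1) → F)) ⧸ φ.ker)
      = Nat.card (Fin n → F) := by
    have h1 := Nat.card_congr (QuotientAddGroup.quotientKerEquivRange φ).toEquiv
    rw [h1]
    rw [AddMonoidHom.range_eq_top.2 hφsurj]
    exact Nat.card_congr AddSubgroup.topEquiv.toEquiv
  have hcardK : Nat.card φ.ker = Nat.card ((Fin (M0 + 1) → F) × (Fin (M1 + 1) → F)) := by
    refine (Nat.card_eq_of_bijective (fun uv : (Fin (M0 + 1) → F) × (Fin (M1 + 1) → F) =>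
      (⟨Cf uv, by rw [AddMonoidHom.mem_ker]; exact hCker uv⟩ : φ.ker)) ⟨?_, ?_⟩).symm
    · intro x y hxy
      exact hCinj (congrArg Subtype.val hxy)
    · rintro ⟨x, hx⟩
      obtain ⟨uv, huv⟩ := hkerC x (AddMonoidHom.mem_ker.1 hx)
      exact ⟨uv, Subtype.ext huv⟩
  have hfin : ∀ (a : ℕ), Nat.card (Fin a → F) = Fintype.card F ^ a := by
    intro a
    rw [Nat.card_eq_fintype_card, Fintype.card_pi_const]
  rw [Nat.card_prod, hfin, hfin] at hcard1
  rw [hcardQ, hcardK, Nat.card_prod, hfin, hfin, hfin] at hcard1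
  rw [← pow_add, ← pow_add, ← pow_add] at hcard1
  have hexp : (N + 1) + (N2 + 1) = n + ((M0 + 1) + (M1 + 1)) :=
    Nat.pow_right_injective hcF hcard1
  omega
end
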